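/- arXiv:2008.03061 — 7 statements merged into one kernel-verified Lean document; each statement's English description precedes it below -/
import Mathlib

section
/- For every n ≥ 1 and every HC-tree (T, δ) of the complete graph K_n, DC-cost(K_n,(T,δ)) = (n³ − n)/3. -/
/-- A rooted binary tree whose leaves are labelled by vertices of type `V`.
Every internal node has exactly two children. -/
inductive HCTree (V : Type) where
  | leaf : V → HCTree V
  | node : HCTree V → HCTree V → HCTree V

namespace HCTree

/-- The list of leaf labels of an HC-tree, from left to right. -/
def leaves {V : Type} : HCTree V → List V
  | leaf v => [v]
  | node l r => leaves l ++ leaves r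

open Classical in
/-- The Dasgupta cost of an HC-tree on a graph `G`: the sum over all edges `uv` of `G`
of the number of leaves of the subtree rooted at the least common ancestor of `u` and `v`.
Equivalently (as computed here, recursively), at each internal node we add
(number of leaves below the node) times (number of edges split at that node). -/
noncomputable def dcCost {V : Type} (G : SimpleGraph V) : HCTree V → ℕ
  | leaf _ => 0
  | node l r =>
      dcCost G l + dcCost G r +
        (l.leaves.length + r.leaves.length) *
          (l.leaves.map (fun u => r.leaves.countP (fun v => decide (G.Adj u v)))).sum

end HCTree

open HCTree

/-- `T` together with the implicit leaf labelling is an HC-tree of a graph on vertex set `V`: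
the leaf labels are pairwise distinct and every vertex occurs as a leaf label,
i.e. the labelling is a bijection between `V` and the leaves of `T`. -/
def IsHCTree {V : Type} (T : HCTree V) : Prop :=
  T.leaves.Nodup ∧ ∀ v : V, v ∈ T.leaves

/-- `W` is the maximum DC-cost over all HC-trees of `G`. -/
def IsMaxCost {V : Type} (G : SimpleGraph V) (W : ℕ) : Prop :=
  (∃ T : HCTree V, IsHCTree T ∧ dcCost G T = W) ∧
  ∀ T : HCTree V, IsHCTree T → dcCost G T ≤ W

/-- `W` is the minimum DC-cost over all HC-trees of `G`. -/
def IsMinCost {V : Type} (G : SimpleGraph V) (W : ℕ) : Prop :=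
  (∃ T : HCTree V, IsHCTree T ∧ dcCost G T = W) ∧
  ∀ T : HCTree V, IsHCTree T → W ≤ dcCost G T

/-- The disjoint union `G^(k)` of `k` copies of `G`, on vertex set `V × Fin k`. -/
def copies {V : Type} (G : SimpleGraph V) (k : ℕ) : SimpleGraph (V × Fin k) where
  Adj a b := a.2 = b.2 ∧ G.Adj a.1 b.1
  symm := ⟨fun _ _ h => ⟨h.1.symm, h.2.symm⟩⟩
  loopless := ⟨fun a h => G.loopless.irrefl a.1 h.2⟩


private lemma hctree_aux (n : ℕ) : ∀ T : HCTree (Fin n), T.leaves.Nodup →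
    3 * dcCost (⊤ : SimpleGraph (Fin n)) T + T.leaves.length = T.leaves.length ^ 3
  | .leaf v, _ => by simp [dcCost, leaves]
  | .node l r, h => by
    rw [leaves, List.nodup_append] at h
    obtain ⟨hl, hr, hd⟩ := h
    have ihl := hctree_aux n l hl
    have ihr := hctree_aux n r hr
    have hsum : (l.leaves.map (fun u => r.leaves.countP
        (fun v => @decide ((⊤ : SimpleGraph (Fin n)).Adj u v) (Classical.propDecidable _)))).sum
        = l.leaves.length * r.leaves.length := by
      rw [List.map_congr_left (g := fun _ => r.leaves.length) (fun u hu => ?_)]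
      · rw [List.map_const', List.sum_replicate, smul_eq_mul]
      · rw [List.countP_eq_length]
        intro v hv
        exact @decide_eq_true _ (Classical.propDecidable _) ((SimpleGraph.top_adj u v).mpr (fun e => hd u hu v hv e))
    show 3 * (dcCost ⊤ l + dcCost ⊤ r + (l.leaves.length + r.leaves.length) * _) +
        (l.leaves ++ r.leaves).length = (l.leaves ++ r.leaves).length ^ 3
    rw [List.length_append, hsum]
    nlinarith [ihl, ihr]

/-- For every `n ≥ 1`, every HC-tree of the complete graph `K_n`
has DC-cost `(n³ − n)/3`. -/
theorem dcCost_completeGraph (n : ℕ) (hn : 1 ≤ n)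
    (T : HCTree (Fin n)) (hT : IsHCTree T) :
    dcCost (⊤ : SimpleGraph (Fin n)) T = (n ^ 3 - n) / 3 := by
  have hlen : T.leaves.length = n := by
    have h1 : T.leaves.toFinset = Finset.univ := by
      ext v; simp [hT.2 v]
    have := Finset.card_univ (α := Fin n)
    rw [← h1, List.toFinset_card_of_nodup hT.1, Fintype.card_fin] at this
    omega
  have h := hctree_aux n T hT.1
  rw [hlen] at h
  have hk : n ≤ n ^ 3 := Nat.le_self_pow (by norm_num) n
  omega
end

section
/- For every graph G on n vertices and every HC-tree (T, δ) of G, DC-cost(G,(T,δ)) + DC-cost(Ḡ,(T,δ)) = (n³ − n)/3, where Ḡ is the complement graph of G. -/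
open HCTree

lemma countP_adj_add_compl {V : Type} (G : SimpleGraph V) (u : V) (rl : List V)
    (hu : u ∉ rl) :
    rl.countP (fun v => @decide (G.Adj u v) (Classical.propDecidable _))
      + rl.countP (fun v => @decide (Gᶜ.Adj u v) (Classical.propDecidable _))
      = rl.length := by
  induction rl with
  | nil => simp
  | cons a t ih =>
    have hua : u ≠ a := fun h => hu (h ▸ List.mem_cons_self)
    have hut : u ∉ t := fun h => hu (List.mem_cons_of_mem _ h)
    have hih := ih hut
    rw [List.countP_cons, List.countP_cons]
    have hcase : (@decide (G.Adj u a) (Classical.propDecidable _) = true ∧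
                    @decide (Gᶜ.Adj u a) (Classical.propDecidable _) = false) ∨
                 (@decide (G.Adj u a) (Classical.propDecidable _) = false ∧
                    @decide (Gᶜ.Adj u a) (Classical.propDecidable _) = true) := by
      by_cases h : G.Adj u a
      · left
        exact ⟨@decide_eq_true _ (Classical.propDecidable _) h,
          @decide_eq_false _ (Classical.propDecidable _) (fun hc => hc.2 h)⟩
      · right
        exact ⟨@decide_eq_false _ (Classical.propDecidable _) h,
          @decide_eq_true _ (Classical.propDecidable _) ⟨hua, h⟩⟩
    rcases hcase with ⟨h1, h2⟩ | ⟨h1, h2⟩ <;>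
      rw [h1, h2] <;> simp only [if_true, Bool.false_eq_true, if_false, List.length_cons] <;> omega

lemma sum_counts {V : Type} (G : SimpleGraph V) (L R : List V)
    (h : ∀ x ∈ L, x ∉ R) :
    (L.map (fun u => R.countP (fun v => @decide (G.Adj u v) (Classical.propDecidable _)))).sum
      + (L.map (fun u => R.countP (fun v => @decide (Gᶜ.Adj u v) (Classical.propDecidable _)))).sum
      = L.length * R.length := by
  induction L with
  | nil => simp
  | cons a t ih =>
    have ha := countP_adj_add_compl G a R (h a List.mem_cons_self)
    have iht := ih (fun x hx => h x (List.mem_cons_of_mem _ hx))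
    simp only [List.map_cons, List.sum_cons, List.length_cons]
    nlinarith [ha, iht]

lemma key_arith (cl cr cl' cr' a b S1 S2 : ℕ)
    (h1 : 3 * (cl + cl') + a = a ^ 3) (h2 : 3 * (cr + cr') + b = b ^ 3)
    (h3 : S1 + S2 = a * b) :
    3 * ((cl + cr + (a + b) * S1) + (cl' + cr' + (a + b) * S2)) + (a + b) = (a + b) ^ 3 := by
  have : (a + b) * S1 + (a + b) * S2 = (a + b) * (a * b) := by rw [← Nat.mul_add, h3]
  nlinarith [h1, h2, this]

open Classical in
lemma key {V : Type} (G : SimpleGraph V) (T : HCTree V) (h : T.leaves.Nodup) :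
    3 * (dcCost G T + dcCost Gᶜ T) + T.leaves.length = T.leaves.length ^ 3 := by
  induction T with
  | leaf v => simp [dcCost, leaves]
  | node l r ihl ihr =>
    have h' : (leaves l ++ leaves r).Nodup := h
    rw [List.nodup_append] at h'
    obtain ⟨hl, hr, hd⟩ := h'
    have ihl := ihl hl
    have ihr := ihr hr
    have hsum := sum_counts G l.leaves r.leaves (fun x hx hm => hd x hx x hm rfl)
    show 3 * ((dcCost G l + dcCost G r + _) + (dcCost Gᶜ l + dcCost Gᶜ r + _)) + _ = _
    simp only [leaves, List.length_append]
    exact key_arith _ _ _ _ _ _ _ _ ihl ihr hsum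

/-- For every graph `G` on `n` vertices and every HC-tree `(T, δ)` of `G`,
`DC-cost(G) + DC-cost(Ḡ) = (n³ − n)/3`. -/
theorem dcCost_add_dcCost_compl {V : Type} [Fintype V] (G : SimpleGraph V)
    (T : HCTree V) (hT : IsHCTree T) :
    dcCost G T + dcCost Gᶜ T = ((Fintype.card V) ^ 3 - Fintype.card V) / 3 := by
  obtain ⟨hnd, hall⟩ := hT
  have hlen : T.leaves.length = Fintype.card V := by
    have := List.Nodup.length_le_card hnd
    have h2 : Fintype.card V ≤ T.leaves.length := by
      classical
      have : (Finset.univ : Finset V) ⊆ T.leaves.toFinset := fun v _ =>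
        List.mem_toFinset.mpr (hall v)
      calc Fintype.card V ≤ T.leaves.toFinset.card := Finset.card_le_card this
        _ ≤ T.leaves.length := T.leaves.toFinset_card_le
    omega
  have := key G T hnd
  rw [hlen] at this
  omega
end

section
/- For every graph G, an HC-tree (T, δ) of G has minimum DC-cost among all HC-trees of G if and only if (T, δ) has maximum DC-cost among all HC-trees of the complement graph Ḡ. -/
open HCTree

/-- Auxiliary: cost of the complete graph, which depends only on tree shape. -/
def kcost {V : Type} : HCTree V → ℕ
  | .leaf _ => 0
  | .node l r => kcost l + kcost r +
      (l.leaves.length + r.leaves.length) * (l.leaves.length * r.leaves.length)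

lemma kcost_cube {V : Type} (T : HCTree V) :
    3 * kcost T + T.leaves.length = T.leaves.length ^ 3 := by
  induction T with
  | leaf v => simp [kcost, leaves]
  | node l r ihl ihr =>
    simp only [kcost, leaves, List.length_append]
    set a := l.leaves.length
    set b := r.leaves.length
    nlinarith [ihl, ihr]

lemma sum_map_add' {α : Type} (f g : α → ℕ) (L : List α) :
    (L.map f).sum + (L.map g).sum = (L.map (fun x => f x + g x)).sum := by
  induction L with
  | nil => simp
  | cons x xs ih => simp [List.map_cons, List.sum_cons, ← ih]; omega

open Classical in
lemma dcCost_add_compl {V : Type} (G : SimpleGraph V) (T : HCTree V)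
    (hnd : T.leaves.Nodup) : dcCost G T + dcCost Gᶜ T = kcost T := by
  induction T with
  | leaf v => simp [dcCost, kcost]
  | node l r ihl ihr =>
    rw [leaves, List.nodup_append] at hnd
    obtain ⟨hl, hr, hdisj⟩ := hnd
    have key : ∀ u ∈ l.leaves,
        r.leaves.countP (fun v => decide (G.Adj u v)) +
        r.leaves.countP (fun v => @decide (Gᶜ.Adj u v) (Classical.propDecidable _)) = r.leaves.length := by
      intro u hu
      have h2 : r.leaves.countP (fun v => @decide (Gᶜ.Adj u v) (Classical.propDecidable _)) =
          r.leaves.countP (fun v => !decide (G.Adj u v)) := by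
        apply List.countP_congr
        intro v hv
        have hne : u ≠ v := hdisj u hu v hv
        simp [SimpleGraph.compl_adj, hne]
      rw [h2]
      have := List.length_eq_countP_add_countP (fun v => decide (G.Adj u v)) (l := r.leaves)
      simp only [decide_not, Bool.decide_eq_true] at this
      omega
    have hsum : (l.leaves.map (fun u => r.leaves.countP (fun v => decide (G.Adj u v)))).sum +
        (l.leaves.map (fun u => r.leaves.countP (fun v => @decide (Gᶜ.Adj u v) (Classical.propDecidable _)))).sum =
        l.leaves.length * r.leaves.length := by
      rw [sum_map_add']
      have : (l.leaves.map (fun u =>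
          r.leaves.countP (fun v => decide (G.Adj u v)) +
          r.leaves.countP (fun v => @decide (Gᶜ.Adj u v) (Classical.propDecidable _)))).sum =
          (l.leaves.map (fun _ => r.leaves.length)).sum := by
        apply congrArg
        exact List.map_congr_left key
      rw [this]
      simp [List.map_const', mul_comm]
    simp only [dcCost, kcost]
    have hil := ihl hl
    have hir := ihr hr
    have hmul : (l.leaves.length + r.leaves.length) *
        (l.leaves.map (fun u => r.leaves.countP (fun v => decide (G.Adj u v)))).sum +
        (l.leaves.length + r.leaves.length) *
        (l.leaves.map (fun u => r.leaves.countP (fun v => @decide (Gᶜ.Adj u v) (Classical.propDecidable _)))).sum =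
        (l.leaves.length + r.leaves.length) * (l.leaves.length * r.leaves.length) := by
      rw [← Nat.mul_add, hsum]
    omega

lemma hctree_length {V : Type} [Fintype V] (T : HCTree V) (hT : IsHCTree T) :
    T.leaves.length = Fintype.card V := by
  obtain ⟨hnd, hall⟩ := hT
  classical
  have h1 : T.leaves.toFinset = Finset.univ := by
    ext v; simp [hall v]
  have := List.toFinset_card_of_nodup hnd
  rw [h1] at this
  simp [Finset.card_univ] at this
  omega

lemma kcost_eq {V : Type} [Fintype V] (T T' : HCTree V) (hT : IsHCTree T)
    (hT' : IsHCTree T') : kcost T = kcost T' := by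
  have h1 := kcost_cube T
  have h2 := kcost_cube T'
  rw [hctree_length T hT] at h1
  rw [hctree_length T' hT'] at h2
  omega

/-- An HC-tree of `G` has minimum DC-cost among all HC-trees of `G`
iff it has maximum DC-cost among all HC-trees of the complement `Ḡ`. -/
theorem minCost_iff_maxCost_compl {V : Type} [Fintype V] (G : SimpleGraph V)
    (T : HCTree V) (hT : IsHCTree T) :
    (∀ T' : HCTree V, IsHCTree T' → dcCost G T ≤ dcCost G T') ↔
    (∀ T' : HCTree V, IsHCTree T' → dcCost Gᶜ T' ≤ dcCost Gᶜ T) := by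
  constructor
  · intro h T' hT'
    have e1 := dcCost_add_compl G T hT.1
    have e2 := dcCost_add_compl G T' hT'.1
    have e3 := kcost_eq T T' hT hT'
    have := h T' hT'
    omega
  · intro h T' hT'
    have e1 := dcCost_add_compl G T hT.1
    have e2 := dcCost_add_compl G T' hT'.1
    have e3 := kcost_eq T T' hT hT'
    have := h T' hT'
    omega
end

section
/- Every bipartite graph G with at least 2 vertices is max-well-behaved; that is, if W denotes the maximum DC-cost over all HC-trees of G, then for every k ≥ 1 the maximum DC-cost over all HC-trees of the disjoint union G^{(k)} of k copies of G equals k²·W. -/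
open HCTree

open Classical Finset

noncomputable def crossN {V : Type} (G : SimpleGraph V) (l r : List V) : ℕ :=
  (l.map (fun u => r.countP (fun v => decide (G.Adj u v)))).sum

lemma crossN_nil {V : Type} (G : SimpleGraph V) (r : List V) : crossN G [] r = 0 := rfl

lemma crossN_cons {V : Type} (G : SimpleGraph V) (u : V) (l r : List V) :
    crossN G (u :: l) r = r.countP (fun v => decide (G.Adj u v)) + crossN G l r := by
  simp [crossN]

lemma crossN_cons_right {V : Type} (G : SimpleGraph V) (v : V) (l r : List V) :
    crossN G l (v :: r) = crossN G l r + l.countP (fun u => decide (G.Adj u v)) := by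
  induction l with
  | nil => simp [crossN]
  | cons a l ih =>
      rw [crossN_cons, crossN_cons, List.countP_cons, List.countP_cons, ih]
      ring

lemma crossN_comm {V : Type} (G : SimpleGraph V) (l r : List V) :
    crossN G l r = crossN G r l := by
  induction l with
  | nil =>
      rw [crossN_nil]
      induction r with
      | nil => rfl
      | cons a r ih => rw [crossN_cons, ih]; simp [List.countP_nil]
  | cons a l ih =>
      rw [crossN_cons, crossN_cons_right, ih, Nat.add_comm]
      congr 1
      apply List.countP_congr
      intro v _
      simp [G.adj_comm]

lemma crossN_append_right {V : Type} (G : SimpleGraph V) (l r₁ r₂ : List V) :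
    crossN G l (r₁ ++ r₂) = crossN G l r₁ + crossN G l r₂ := by
  simp [crossN, List.countP_append, List.sum_map_add]

lemma crossN_append_left {V : Type} (G : SimpleGraph V) (l₁ l₂ r : List V) :
    crossN G (l₁ ++ l₂) r = crossN G l₁ r + crossN G l₂ r := by
  simp [crossN]

lemma eN_append {V : Type} (G : SimpleGraph V) (l r : List V) :
    crossN G (l ++ r) (l ++ r) = crossN G l l + crossN G r r + 2 * crossN G l r := by
  rw [crossN_append_left, crossN_append_right, crossN_append_right,
    crossN_comm G r l]
  ring

/-- doubled Dasgupta cost upper bound -/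
lemma two_dcCost_le {V : Type} (G : SimpleGraph V) (n : ℕ) :
    ∀ T : HCTree V, T.leaves.length ≤ n →
      2 * dcCost G T ≤ n * crossN G T.leaves T.leaves
  | HCTree.leaf v, _ => by simp [dcCost]
  | HCTree.node l r, h => by
      have hl : l.leaves.length ≤ n := by
        simp [leaves, List.length_append] at h; omega
      have hr : r.leaves.length ≤ n := by
        simp [leaves, List.length_append] at h; omega
      have ihl := two_dcCost_le G n l hl
      have ihr := two_dcCost_le G n r hr
      have hlen : l.leaves.length + r.leaves.length ≤ n := by
        simpa [leaves, List.length_append] using h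
      show 2 * (dcCost G l + dcCost G r +
          (l.leaves.length + r.leaves.length) * crossN G l.leaves r.leaves) ≤
        n * crossN G (l.leaves ++ r.leaves) (l.leaves ++ r.leaves)
      rw [eN_append]
      have : 2 * ((l.leaves.length + r.leaves.length) * crossN G l.leaves r.leaves)
          ≤ n * (2 * crossN G l.leaves r.leaves) := by
        have := Nat.mul_le_mul_right (crossN G l.leaves r.leaves) hlen
        calc 2 * ((l.leaves.length + r.leaves.length) * crossN G l.leaves r.leaves)
            = 2 * ((l.leaves.length + r.leaves.length) * crossN G l.leaves r.leaves) := rfl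
          _ ≤ 2 * (n * crossN G l.leaves r.leaves) := by
              exact Nat.mul_le_mul_left 2 this
          _ = n * (2 * crossN G l.leaves r.leaves) := by ring
      calc 2 * (dcCost G l + dcCost G r +
            (l.leaves.length + r.leaves.length) * crossN G l.leaves r.leaves)
          = 2 * dcCost G l + 2 * dcCost G r +
            2 * ((l.leaves.length + r.leaves.length) * crossN G l.leaves r.leaves) := by ring
        _ ≤ n * crossN G l.leaves l.leaves + n * crossN G r.leaves r.leaves +
            n * (2 * crossN G l.leaves r.leaves) := by
            exact Nat.add_le_add (Nat.add_le_add ihl ihr) this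
        _ = n * (crossN G l.leaves l.leaves + crossN G r.leaves r.leaves +
            2 * crossN G l.leaves r.leaves) := by ring

noncomputable def Esum {V : Type} [Fintype V] (G : SimpleGraph V) : ℕ :=
  ∑ u : V, (Finset.univ.filter (fun v => G.Adj u v)).card

lemma countP_full {V : Type} [Fintype V] (G : SimpleGraph V) (L : List V)
    (hnd : L.Nodup) (hall : ∀ v : V, v ∈ L) (u : V) :
    L.countP (fun v => decide (G.Adj u v)) = (Finset.univ.filter (fun v => G.Adj u v)).card := by
  rw [List.countP_eq_length_filter]
  rw [← List.toFinset_card_of_nodup (hnd.filter _)]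
  congr 1
  ext v
  simp [List.mem_filter, hall v, decide_eq_true_iff]

lemma eN_full {V : Type} [Fintype V] (G : SimpleGraph V) (L : List V)
    (hnd : L.Nodup) (hall : ∀ v : V, v ∈ L) :
    crossN G L L = Esum G := by
  unfold crossN Esum
  have h1 : ∀ u : V, L.countP (fun v => decide (G.Adj u v)) =
      (Finset.univ.filter (fun v => G.Adj u v)).card := countP_full G L hnd hall
  rw [← List.sum_toFinset _ hnd]
  have hLt : L.toFinset = Finset.univ := by
    apply Finset.eq_univ_iff_forall.2
    intro v; simpa using hall v
  rw [hLt]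
  exact Finset.sum_congr rfl (fun u _ => h1 u)

lemma length_full {V : Type} [Fintype V] (L : List V)
    (hnd : L.Nodup) (hall : ∀ v : V, v ∈ L) : L.length = Fintype.card V := by
  rw [← List.toFinset_card_of_nodup hnd]
  have hLt : L.toFinset = Finset.univ := by
    apply Finset.eq_univ_iff_forall.2
    intro v; simpa using hall v
  rw [hLt]; rfl

lemma two_dcCost_le_of_isHCTree {V : Type} [Fintype V] (G : SimpleGraph V)
    (T : HCTree V) (hT : IsHCTree T) :
    2 * dcCost G T ≤ Fintype.card V * Esum G := by
  have := two_dcCost_le G (Fintype.card V) T (le_of_eq (length_full T.leaves hT.1 hT.2))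
  rwa [eN_full G T.leaves hT.1 hT.2] at this

/-- caterpillar tree -/
def cat {V : Type} (v : V) : List V → HCTree V
  | [] => HCTree.leaf v
  | w :: t => HCTree.node (HCTree.leaf v) (cat w t)

lemma cat_leaves {V : Type} : ∀ (t : List V) (v : V), (cat v t).leaves = v :: t
  | [], v => rfl
  | w :: t, v => by simp [cat, leaves, cat_leaves t w]

lemma cat_dcCost {V : Type} (G : SimpleGraph V) :
    ∀ (t : List V) (v : V), (∀ u ∈ v :: t, ∀ w ∈ v :: t, ¬ G.Adj u w) →
      dcCost G (cat v t) = 0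
  | [], v, _ => rfl
  | w :: t, v, h => by
      have ih := cat_dcCost G t w (fun u hu x hx =>
        h u (List.mem_cons_of_mem _ hu) x (List.mem_cons_of_mem _ hx))
      show dcCost G (HCTree.leaf v) + dcCost G (cat w t) + _ * _ = 0
      rw [ih]
      simp only [dcCost, Nat.zero_add, Nat.add_zero, Nat.mul_eq_zero, leaves]
      right
      simp only [List.map_cons, List.map_nil, List.sum_cons, List.sum_nil, Nat.add_zero]
      rw [cat_leaves]
      apply List.countP_eq_zero.2
      intro x hx
      simp only [decide_eq_true_iff]
      exact h v List.mem_cons_self x (List.mem_cons_of_mem _ hx)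

lemma cross_of_node {V : Type} (G : SimpleGraph V) (l r : HCTree V) :
    dcCost G (HCTree.node l r) = dcCost G l + dcCost G r +
      (l.leaves.length + r.leaves.length) * crossN G l.leaves r.leaves := rfl

lemma exists_good_tree {U : Type} [Fintype U] [Nonempty U] (H : SimpleGraph U)
    (c' : U → Bool) (hc' : ∀ u v, H.Adj u v → c' u ≠ c' v) :
    ∃ T : HCTree U, IsHCTree T ∧ 2 * dcCost H T = Fintype.card U * Esum H := by
  classical
  set L := (Finset.univ : Finset U).toList with hL
  have hLnd : L.Nodup := Finset.nodup_toList _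
  have hLall : ∀ v : U, v ∈ L := fun v => by simp [hL, Finset.mem_toList]
  set A := L.filter (fun u => c' u) with hA
  set B := L.filter (fun u => !c' u) with hB
  have hAmem : ∀ u, u ∈ A ↔ c' u = true := by
    intro u; simp [hA, List.mem_filter, hLall u]
  have hBmem : ∀ u, u ∈ B ↔ c' u = false := by
    intro u; simp [hB, List.mem_filter, hLall u]
  have hAnd : A.Nodup := hLnd.filter _
  have hBnd : B.Nodup := hLnd.filter _
  have hlen : A.length + B.length = L.length := by
    rw [hA, hB]
    exact (List.length_eq_length_filter_add (fun u => c' u)).symm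
  rcases hB_eq : B with _ | ⟨b, B'⟩
  · -- B empty: all vertices true, no edges
    have hall_true : ∀ u : U, c' u = true := by
      intro u
      by_contra h
      have : u ∈ B := (hBmem u).2 (by revert h; cases c' u <;> simp)
      rw [hB_eq] at this; exact absurd this List.not_mem_nil
    have hnoedge : ∀ u v : U, ¬ H.Adj u v := fun u v h =>
      hc' u v h (by rw [hall_true, hall_true])
    have hEsum : Esum H = 0 := by
      unfold Esum
      apply Finset.sum_eq_zero
      intro u _
      simp only [Finset.card_eq_zero]
      ext v; simp [hnoedge u v]
    rcases hLcase : L with _ | ⟨v, t⟩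
    · exact absurd (hLall (Classical.arbitrary U)) (by rw [hLcase]; simp)
    · refine ⟨cat v t, ⟨?_, ?_⟩, ?_⟩
      · rw [cat_leaves]; rw [hLcase] at hLnd; exact hLnd
      · intro w; rw [cat_leaves]; rw [hLcase] at hLall; exact hLall w
      · rw [cat_dcCost H t v (fun u _ w _ => hnoedge u w), hEsum]; ring
  · rcases hA_eq : A with _ | ⟨a, A'⟩
    · -- A empty: all vertices false, no edges
      have hall_false : ∀ u : U, c' u = false := by
        intro u
        by_contra h
        have : u ∈ A := (hAmem u).2 (by revert h; cases c' u <;> simp)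
        rw [hA_eq] at this; exact absurd this List.not_mem_nil
      have hnoedge : ∀ u v : U, ¬ H.Adj u v := fun u v h =>
        hc' u v h (by rw [hall_false, hall_false])
      have hEsum : Esum H = 0 := by
        unfold Esum
        apply Finset.sum_eq_zero
        intro u _
        simp only [Finset.card_eq_zero]
        ext v; simp [hnoedge u v]
      rcases hLcase : L with _ | ⟨v, t⟩
      · exact absurd (hLall (Classical.arbitrary U)) (by rw [hLcase]; simp)
      · refine ⟨cat v t, ⟨?_, ?_⟩, ?_⟩
        · rw [cat_leaves]; rw [hLcase] at hLnd; exact hLnd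
        · intro w; rw [cat_leaves]; rw [hLcase] at hLall; exact hLall w
        · rw [cat_dcCost H t v (fun u _ w _ => hnoedge u w), hEsum]; ring
    · -- both nonempty
      refine ⟨HCTree.node (cat a A') (cat b B'), ⟨?_, ?_⟩, ?_⟩
      · show (leaves _).Nodup
        rw [show leaves (HCTree.node (cat a A') (cat b B')) =
          (cat a A').leaves ++ (cat b B').leaves from rfl, cat_leaves, cat_leaves,
          ← hA_eq, ← hB_eq]
        refine List.Nodup.append hAnd hBnd ?_
        intro x hxA hxB
        have h1 := (hAmem x).1 hxA
        have h2 := (hBmem x).1 hxB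
        rw [h1] at h2; exact Bool.noConfusion h2
      · intro v
        show v ∈ leaves _
        rw [show leaves (HCTree.node (cat a A') (cat b B')) =
          (cat a A').leaves ++ (cat b B').leaves from rfl, cat_leaves, cat_leaves,
          ← hA_eq, ← hB_eq, List.mem_append]
        rcases h : c' v with _ | _
        · right; exact (hBmem v).2 h
        · left; exact (hAmem v).2 h
      · -- cost computation
        have hAno : ∀ u ∈ A, ∀ w ∈ A, ¬ H.Adj u w := by
          intro u hu w hw hadj
          exact hc' u w hadj (by rw [(hAmem u).1 hu, (hAmem w).1 hw])
        have hBno : ∀ u ∈ B, ∀ w ∈ B, ¬ H.Adj u w := by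
          intro u hu w hw hadj
          exact hc' u w hadj (by rw [(hBmem u).1 hu, (hBmem w).1 hw])
        have hdcA : dcCost H (cat a A') = 0 := by
          apply cat_dcCost H A' a
          rw [← hA_eq]; exact hAno
        have hdcB : dcCost H (cat b B') = 0 := by
          apply cat_dcCost H B' b
          rw [← hB_eq]; exact hBno
        rw [cross_of_node, hdcA, hdcB, cat_leaves, cat_leaves, ← hA_eq, ← hB_eq]
        have hABnd : (A ++ B).Nodup := by
          refine List.Nodup.append hAnd hBnd ?_
          intro x hxA hxB
          have h1 := (hAmem x).1 hxA
          have h2 := (hBmem x).1 hxB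
          rw [h1] at h2; exact Bool.noConfusion h2
        have hABall : ∀ v : U, v ∈ A ++ B := by
          intro v
          rw [List.mem_append]
          rcases h : c' v with _ | _
          · right; exact (hBmem v).2 h
          · left; exact (hAmem v).2 h
        have hfull : crossN H (A ++ B) (A ++ B) = Esum H := eN_full H _ hABnd hABall
        rw [eN_append] at hfull
        have hcA : crossN H A A = 0 := by
          unfold crossN
          apply List.sum_eq_zero
          intro x hx
          rw [List.mem_map] at hx
          obtain ⟨u, hu, rfl⟩ := hx
          apply List.countP_eq_zero.2
          intro w hw
          simp only [decide_eq_true_iff]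
          exact hAno u hu w hw
        have hcB : crossN H B B = 0 := by
          unfold crossN
          apply List.sum_eq_zero
          intro x hx
          rw [List.mem_map] at hx
          obtain ⟨u, hu, rfl⟩ := hx
          apply List.countP_eq_zero.2
          intro w hw
          simp only [decide_eq_true_iff]
          exact hBno u hu w hw
        rw [hcA, hcB] at hfull
        have hlen2 : A.length + B.length = Fintype.card U := by
          rw [hlen, length_full L hLnd hLall]
        rw [hlen2, ← hfull]
        ring

lemma Esum_copies {V : Type} [Fintype V] (G : SimpleGraph V) (k : ℕ) :
    Esum (copies G k) = k * Esum G := by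
  classical
  unfold Esum
  rw [Fintype.sum_prod_type]
  have key : ∀ (u : V) (i : Fin k),
      (Finset.univ.filter (fun q : V × Fin k => (copies G k).Adj (u, i) q)).card
        = (Finset.univ.filter (fun v => G.Adj u v)).card := by
    intro u i
    have himg : (Finset.univ.filter (fun q : V × Fin k => (copies G k).Adj (u, i) q))
        = (Finset.univ.filter (fun v => G.Adj u v)).image (fun v => (v, i)) := by
      ext q
      simp only [Finset.mem_filter, Finset.mem_univ, true_and, Finset.mem_image]
      constructor
      · rintro ⟨h1, h2⟩
        obtain ⟨q1, q2⟩ := q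
        simp only at h1 h2
        exact ⟨q1, h2, by rw [h1]⟩
      · rintro ⟨v, hv, rfl⟩
        exact ⟨rfl, hv⟩
    rw [himg, Finset.card_image_of_injective]
    intro a b hab
    exact (Prod.mk.injEq _ _ _ _ ▸ hab).1
  calc (∑ u : V, ∑ i : Fin k,
        (Finset.univ.filter (fun q : V × Fin k => (copies G k).Adj (u, i) q)).card)
      = ∑ u : V, ∑ _i : Fin k, (Finset.univ.filter (fun v => G.Adj u v)).card := by
        apply Finset.sum_congr rfl
        intro u _
        exact Finset.sum_congr rfl (fun i _ => key u i)
    _ = ∑ u : V, k * (Finset.univ.filter (fun v => G.Adj u v)).card := by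
        apply Finset.sum_congr rfl
        intro u _
        simp [Finset.sum_const, Nat.smul_one_eq_cast]
    _ = k * ∑ u : V, (Finset.univ.filter (fun v => G.Adj u v)).card := by
        rw [Finset.mul_sum]

/-- Every bipartite graph `G` with at least 2 vertices is
max-well-behaved: if `W` is the maximum DC-cost over HC-trees of `G`, then for every
`k ≥ 1` the maximum DC-cost over HC-trees of the disjoint union `G^(k)` equals `k² W`. -/
theorem bipartite_maxWellBehaved {V : Type} [Fintype V] (G : SimpleGraph V) (c : V → Bool)
    (hc : ∀ u v : V, G.Adj u v → c u ≠ c v) (hn : 2 ≤ Fintype.card V)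
    (W : ℕ) (hW : IsMaxCost G W) (k : ℕ) (hk : 1 ≤ k) :
    IsMaxCost (copies G k) (k ^ 2 * W) := by
  classical
  haveI hne : Nonempty V := Fintype.card_pos_iff.mp (by omega)
  haveI hnek : Nonempty (Fin k) := ⟨⟨0, hk⟩⟩
  obtain ⟨⟨T0, hT0, hT0c⟩, hub⟩ := hW
  have h1 : 2 * W ≤ Fintype.card V * Esum G := by
    rw [← hT0c]
    exact two_dcCost_le_of_isHCTree G T0 hT0
  obtain ⟨T1, hT1, hT1c⟩ := exists_good_tree G c hc
  have h2 : Fintype.card V * Esum G ≤ 2 * W := by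
    rw [← hT1c]
    exact Nat.mul_le_mul_left 2 (hub T1 hT1)
  have hWE : Fintype.card V * Esum G = 2 * W := le_antisymm h2 h1
  have hcardk : Fintype.card (V × Fin k) = Fintype.card V * k := by
    simp [Fintype.card_prod]
  have hkey : Fintype.card (V × Fin k) * Esum (copies G k) = 2 * (k ^ 2 * W) := by
    rw [hcardk, Esum_copies]
    calc Fintype.card V * k * (k * Esum G)
        = k ^ 2 * (Fintype.card V * Esum G) := by ring
      _ = k ^ 2 * (2 * W) := by rw [hWE]
      _ = 2 * (k ^ 2 * W) := by ring
  constructor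
  · obtain ⟨T, hT, hTc⟩ := exists_good_tree (copies G k) (fun p => c p.1)
      (fun u v h => hc u.1 v.1 h.2)
    refine ⟨T, hT, ?_⟩
    have h3 : 2 * dcCost (copies G k) T = 2 * (k ^ 2 * W) := hTc.trans hkey
    omega
  · intro T hT
    have h3 := two_dcCost_le_of_isHCTree (copies G k) T hT
    rw [hkey] at h3
    omega
end

section
/- Let G be a connected graph and let (T, δ) be an HC-tree of G of minimum DC-cost among all HC-trees of G. Then for every node t of T, the subgraph of G induced by the set of vertices mapped by δ to leaves of the subtree of T rooted at t is connected. -/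
open HCTree

/-- `Subtree s t` holds iff `s` is the subtree of `t` rooted at some node of `t`. -/
inductive Subtree {V : Type} : HCTree V → HCTree V → Prop
  | refl (t : HCTree V) : Subtree t t
  | left {l r t : HCTree V} : Subtree t l → Subtree t (HCTree.node l r)
  | right {l r t : HCTree V} : Subtree t r → Subtree t (HCTree.node l r)

namespace HCAux
variable {V : Type}

open Classical in
noncomputable def cross (G : SimpleGraph V) (L R : List V) : ℕ :=
  (L.map (fun u => R.countP (fun v => decide (G.Adj u v)))).sum

lemma dcCost_node (G : SimpleGraph V) (l r : HCTree V) :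
    dcCost G (HCTree.node l r) = dcCost G l + dcCost G r +
      (l.leaves.length + r.leaves.length) * cross G l.leaves r.leaves := rfl

lemma cross_nil_left (G : SimpleGraph V) (R : List V) : cross G [] R = 0 := rfl

lemma cross_nil_right (G : SimpleGraph V) (L : List V) : cross G L [] = 0 := by
  induction L with
  | nil => rfl
  | cons u L ih =>
    simp only [cross, List.map_cons, List.sum_cons, List.countP_nil] at ih ⊢
    omega

lemma cross_append_left (G : SimpleGraph V) (L₁ L₂ R : List V) :
    cross G (L₁ ++ L₂) R = cross G L₁ R + cross G L₂ R := by
  simp [cross]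

lemma cross_append_right (G : SimpleGraph V) (L R₁ R₂ : List V) :
    cross G L (R₁ ++ R₂) = cross G L R₁ + cross G L R₂ := by
  induction L with
  | nil => rfl
  | cons u L ih =>
    simp only [cross, List.map_cons, List.sum_cons, List.countP_append] at ih ⊢
    omega

lemma cross_perm_left (G : SimpleGraph V) {L₁ L₂ : List V} (h : L₁.Perm L₂) (R : List V) :
    cross G L₁ R = cross G L₂ R := (h.map _).sum_eq

lemma cross_perm_right (G : SimpleGraph V) (L : List V) {R₁ R₂ : List V} (h : R₁.Perm R₂) :
    cross G L R₁ = cross G L R₂ := by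
  unfold cross; congr 1; exact List.map_congr_left fun u _ => h.countP_eq _

open Classical in
lemma cross_singleton (G : SimpleGraph V) (u v : V) :
    cross G [u] [v] = if G.Adj u v then 1 else 0 := by
  by_cases h : G.Adj u v <;>
    simp [cross, List.countP_cons, List.countP_nil, h]

lemma cross_single_comm (G : SimpleGraph V) (u : V) (R : List V) :
    cross G [u] R = cross G R [u] := by
  classical
  induction R with
  | nil => rw [cross_nil_left, cross_nil_right]
  | cons v R ihR =>
    have a1 : cross G [u] (v :: R) = cross G [u] [v] + cross G [u] R :=
      cross_append_right G [u] [v] R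
    have a2 : cross G (v :: R) [u] = cross G [v] [u] + cross G R [u] :=
      cross_append_left G [v] R [u]
    rw [a1, a2, ihR, cross_singleton, cross_singleton]
    by_cases h : G.Adj u v
    · rw [if_pos h, if_pos (G.adj_symm h)]
    · rw [if_neg h, if_neg (fun h' => h (G.adj_symm h'))]

lemma cross_comm (G : SimpleGraph V) (L R : List V) : cross G L R = cross G R L := by
  induction L with
  | nil => rw [cross_nil_left, cross_nil_right]
  | cons u L ihL =>
    have h1 : cross G (u :: L) R = cross G [u] R + cross G L R := cross_append_left G [u] L R
    have h2 : cross G R (u :: L) = cross G R [u] + cross G R L := cross_append_right G R [u] L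
    have h3 := cross_single_comm G u R
    omega

lemma cross_eq_zero (G : SimpleGraph V) {L R : List V}
    (h : ∀ u ∈ L, ∀ v ∈ R, ¬ G.Adj u v) : cross G L R = 0 := by
  apply List.sum_eq_zero
  intro x hx
  obtain ⟨u, hu, rfl⟩ := List.mem_map.mp hx
  rw [List.countP_eq_zero]
  intro v hv
  simpa using h u hu v hv

lemma cross_pos (G : SimpleGraph V) {L R : List V} {u v : V}
    (hu : u ∈ L) (hv : v ∈ R) (h : G.Adj u v) : 0 < cross G L R := by
  classical
  have h1 : 0 < R.countP (fun v => decide (G.Adj u v)) :=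
    List.countP_pos_iff.mpr ⟨v, hv, by simpa using h⟩
  have h2 : R.countP (fun v => decide (G.Adj u v)) ≤ cross G L R := by
    apply List.single_le_sum (fun x _ => Nat.zero_le x)
    exact List.mem_map_of_mem hu
  omega


def filt (p : V → Bool) : HCTree V → Option (HCTree V)
  | .leaf v => if p v then some (.leaf v) else none
  | .node l r =>
    match filt p l, filt p r with
    | some a, some b => some (.node a b)
    | some a, none => some a
    | none, b => b

def oleaves : Option (HCTree V) → List V
  | none => []
  | some t => t.leaves

noncomputable def ocost (G : SimpleGraph V) : Option (HCTree V) → ℕ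
  | none => 0
  | some t => dcCost G t

lemma oleaves_comb (a b : Option (HCTree V)) :
    oleaves (match a, b with
      | some a, some b => some (HCTree.node a b)
      | some a, none => some a
      | none, b => b) = oleaves a ++ oleaves b := by
  cases a <;> cases b <;> simp [oleaves, leaves]

lemma oleaves_filt (p : V → Bool) (t : HCTree V) :
    oleaves (filt p t) = t.leaves.filter p := by
  induction t with
  | leaf v =>
    by_cases h : p v <;> simp [filt, oleaves, leaves, List.filter, h]
  | node l r ihl ihr =>
    have hstep : filt p (HCTree.node l r) = (match filt p l, filt p r with
      | some a, some b => some (HCTree.node a b)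
      | some a, none => some a
      | none, b => b) := rfl
    rw [hstep, oleaves_comb, ihl, ihr]
    show _ = (l.leaves ++ r.leaves).filter p
    rw [List.filter_append]

lemma ocost_comb (G : SimpleGraph V) (a b : Option (HCTree V)) :
    ocost G (match a, b with
      | some a, some b => some (HCTree.node a b)
      | some a, none => some a
      | none, b => b) =
    ocost G a + ocost G b +
      ((oleaves a).length + (oleaves b).length) * cross G (oleaves a) (oleaves b) := by
  cases a <;> cases b <;>
    simp [ocost, oleaves, dcCost_node, cross_nil_left, cross_nil_right]

lemma filt_cost_le (G : SimpleGraph V) (p : V → Bool) (t : HCTree V)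
    (h : ∀ u ∈ t.leaves, ∀ v ∈ t.leaves, p u = true → p v = false → ¬ G.Adj u v) :
    ocost G (filt p t) + ocost G (filt (fun v => !p v) t) ≤ dcCost G t := by
  induction t with
  | leaf v =>
    by_cases hv : p v <;> simp [filt, ocost, dcCost, hv]
  | node l r ihl ihr =>
    have hmeml : ∀ u ∈ l.leaves, u ∈ (HCTree.node l r).leaves := by
      intro u hu; simp [leaves]; exact Or.inl hu
    have hmemr : ∀ u ∈ r.leaves, u ∈ (HCTree.node l r).leaves := by
      intro u hu; simp [leaves]; exact Or.inr hu
    have hl := ihl (fun u hu v hv => h u (hmeml u hu) v (hmeml v hv))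
    have hr := ihr (fun u hu v hv => h u (hmemr u hu) v (hmemr v hv))
    set q : V → Bool := fun v => !p v with hq
    have hfa : filt p (HCTree.node l r) = (match filt p l, filt p r with
      | some a, some b => some (HCTree.node a b)
      | some a, none => some a
      | none, b => b) := rfl
    have hfb : filt q (HCTree.node l r) = (match filt q l, filt q r with
      | some a, some b => some (HCTree.node a b)
      | some a, none => some a
      | none, b => b) := rfl
    rw [hfa, hfb, ocost_comb, ocost_comb, dcCost_node]
    set Al := oleaves (filt p l) with hAl
    set Ar := oleaves (filt p r) with hAr
    set Bl := oleaves (filt q l) with hBl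
    set Br := oleaves (filt q r) with hBr
    have hpermL : (Al ++ Bl).Perm l.leaves := by
      rw [hAl, hBl, oleaves_filt, oleaves_filt]; exact List.filter_append_perm p l.leaves
    have hpermR : (Ar ++ Br).Perm r.leaves := by
      rw [hAr, hBr, oleaves_filt, oleaves_filt]; exact List.filter_append_perm p r.leaves
    have hmemA : ∀ s : HCTree V, ∀ u ∈ oleaves (filt p s), u ∈ s.leaves ∧ p u = true := by
      intro s u hu; rw [oleaves_filt] at hu; exact ⟨(List.mem_filter.mp hu).1, (List.mem_filter.mp hu).2⟩
    have hmemB : ∀ s : HCTree V, ∀ u ∈ oleaves (filt q s), u ∈ s.leaves ∧ p u = false := by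
      intro s u hu; rw [oleaves_filt] at hu
      refine ⟨(List.mem_filter.mp hu).1, ?_⟩
      have := (List.mem_filter.mp hu).2
      simpa [hq] using this
    have hAB : cross G Al Br = 0 := by
      apply cross_eq_zero
      intro u hu v hv
      exact h u (hmeml u (hmemA l u hu).1) v (hmemr v (hmemB r v hv).1) (hmemA l u hu).2 (hmemB r v hv).2
    have hBA : cross G Bl Ar = 0 := by
      apply cross_eq_zero
      intro u hu v hv
      intro hadj
      exact h v (hmemr v (hmemA r v hv).1) u (hmeml u (hmemB l u hu).1) (hmemA r v hv).2
        (hmemB l u hu).2 (G.adj_symm hadj)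
    have hcr : cross G l.leaves r.leaves = cross G Al Ar + cross G Bl Br := by
      rw [← cross_perm_left G hpermL, ← cross_perm_right G _ hpermR,
        cross_append_left, cross_append_right, cross_append_right, hAB, hBA]
      omega
    have hlenl : Al.length + Bl.length = l.leaves.length := by
      have := hpermL.length_eq; simpa using this
    have hlenr : Ar.length + Br.length = r.leaves.length := by
      have := hpermR.length_eq; simpa using this
    rw [hcr, ← hlenl, ← hlenr]
    nlinarith [Nat.zero_le (cross G Al Ar), Nat.zero_le (cross G Bl Br)]



lemma leaves_ne_nil : ∀ t : HCTree V, t.leaves ≠ []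
  | .leaf v => by simp [leaves]
  | .node l r => by
    simp only [leaves, ne_eq, List.append_eq_nil_iff]
    intro h
    exact leaves_ne_nil l h.1

lemma subtree_trans {a b c : HCTree V} (h1 : Subtree a b) (h2 : Subtree b c) : Subtree a c := by
  induction h2 with
  | refl t => exact h1
  | left h ih => exact Subtree.left (ih h1)
  | right h ih => exact Subtree.right (ih h1)

lemma subtree_sublist {s t : HCTree V} (h : Subtree s t) : s.leaves.Sublist t.leaves := by
  induction h with
  | refl t => exact List.Sublist.refl _
  | @left l r u h ih => exact ih.trans (by simpa [leaves] using List.sublist_append_left l.leaves r.leaves)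
  | @right l r u h ih => exact ih.trans (by simpa [leaves] using List.sublist_append_right l.leaves r.leaves)

lemma replace (G : SimpleGraph V) {s T : HCTree V} (hs : Subtree s T) (s' : HCTree V)
    (hperm : s'.leaves.Perm s.leaves) :
    ∃ T' : HCTree V, Subtree s' T' ∧ T'.leaves.Perm T.leaves ∧
      dcCost G T' + dcCost G s = dcCost G T + dcCost G s' := by
  induction hs with
  | refl t => exact ⟨s', Subtree.refl _, hperm, by omega⟩
  | @left l r u h ih =>
    obtain ⟨l', hsub, hp, hc⟩ := ih hperm
    refine ⟨HCTree.node l' r, Subtree.left hsub, ?_, ?_⟩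
    · show (l'.leaves ++ r.leaves).Perm (l.leaves ++ r.leaves)
      exact hp.append_right _
    · rw [dcCost_node, dcCost_node, hp.length_eq, cross_perm_left G hp]
      omega
  | @right l r u h ih =>
    obtain ⟨r', hsub, hp, hc⟩ := ih hperm
    refine ⟨HCTree.node l r', Subtree.right hsub, ?_, ?_⟩
    · show (l.leaves ++ r'.leaves).Perm (l.leaves ++ r.leaves)
      exact hp.append_left _
    · rw [dcCost_node, dcCost_node, hp.length_eq, cross_perm_right G _ hp]
      omega



lemma main_aux (G : SimpleGraph V) (U : HCTree V) (hU : IsHCTree U)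
    (l r : HCTree V) (hsub : Subtree (HCTree.node l r) U)
    (hc : (G.induce {v : V | v ∈ (HCTree.node l r).leaves}).Connected)
    (hl : ¬ (G.induce {v : V | v ∈ l.leaves}).Connected) :
    ∃ T' : HCTree V, IsHCTree T' ∧ dcCost G T' < dcCost G U := by
  classical
  set Lset : Set V := {v : V | v ∈ l.leaves} with hLset
  set Sset : Set V := {v : V | v ∈ (HCTree.node l r).leaves} with hSset
  -- disconnectedness gives two non-reachable vertices
  obtain ⟨a0, ha0⟩ := List.exists_mem_of_ne_nil _ (leaves_ne_nil l)
  have hne : Nonempty ↥Lset := ⟨⟨a0, ha0⟩⟩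
  have hnp : ¬ (G.induce Lset).Preconnected := by
    intro hp; exact hl ((SimpleGraph.connected_iff _).mpr ⟨hp, hne⟩)
  rw [SimpleGraph.Preconnected] at hnp
  push_neg at hnp
  obtain ⟨x, y, hxy⟩ := hnp
  -- the reachability predicate
  set p : V → Bool := fun v => decide (∃ hv : v ∈ Lset, (G.induce Lset).Reachable x ⟨v, hv⟩)
    with hp_def
  have hpx : p x.1 = true := decide_eq_true ⟨x.2, SimpleGraph.Reachable.refl x⟩
  have hpy : p y.1 = false := by
    apply decide_eq_false
    rintro ⟨hv, hr⟩
    exact hxy hr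
  -- no edges between the p-side and the non-p-side within l's leaves
  have noAB : ∀ u ∈ l.leaves, ∀ v ∈ l.leaves, p u = true → p v = false → ¬ G.Adj u v := by
    intro u hu v hv hpu hpv hadj
    obtain ⟨hu', hru⟩ := of_decide_eq_true hpu
    have hadj' : (G.induce Lset).Adj ⟨u, hu'⟩ ⟨v, hv⟩ := hadj
    have : p v = true := decide_eq_true ⟨hv, hru.trans hadj'.reachable⟩
    rw [hpv] at this
    exact Bool.false_ne_true this
  set q : V → Bool := fun v => !p v with hq_def
  -- the two filtered trees
  obtain ⟨fA, hfA⟩ : ∃ fA, filt p l = some fA := by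
    cases hfa : filt p l with
    | some fA => exact ⟨fA, rfl⟩
    | none =>
      exfalso
      have h1 := oleaves_filt p l
      rw [hfa] at h1
      have hx : x.1 ∈ l.leaves.filter p := List.mem_filter.mpr ⟨x.2, hpx⟩
      rw [← h1] at hx
      simp [oleaves] at hx
  obtain ⟨fB, hfB⟩ : ∃ fB, filt q l = some fB := by
    cases hfb : filt q l with
    | some fB => exact ⟨fB, rfl⟩
    | none =>
      exfalso
      have h1 := oleaves_filt q l
      rw [hfb] at h1
      have hy : y.1 ∈ l.leaves.filter q := List.mem_filter.mpr ⟨y.2, by simp [hq_def, hpy]⟩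
      rw [← h1] at hy
      simp [oleaves] at hy
  have hfAl : fA.leaves = l.leaves.filter p := by
    have h1 := oleaves_filt p l; rw [hfA] at h1; exact h1
  have hfBl : fB.leaves = l.leaves.filter q := by
    have h1 := oleaves_filt q l; rw [hfB] at h1; exact h1
  have hmemA : ∀ u ∈ fA.leaves, u ∈ l.leaves ∧ p u = true := by
    intro u hu; rw [hfAl] at hu
    exact ⟨(List.mem_filter.mp hu).1, (List.mem_filter.mp hu).2⟩
  have hmemB : ∀ u ∈ fB.leaves, u ∈ l.leaves ∧ p u = false := by
    intro u hu; rw [hfBl] at hu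
    refine ⟨(List.mem_filter.mp hu).1, ?_⟩
    have := (List.mem_filter.mp hu).2
    simpa [hq_def] using this
  -- nodup and disjointness of l.leaves and r.leaves
  have hnodup : ((HCTree.node l r).leaves).Nodup := (subtree_sublist hsub).nodup hU.1
  have hdisj : ∀ v ∈ l.leaves, v ∉ r.leaves := by
    have := (List.nodup_append'.mp hnodup).2.2
    exact fun v hv hv' => this hv hv'
  -- an edge between fB.leaves and r.leaves, via a boundary dart in the connected induced graph
  obtain ⟨c0, hc0⟩ := List.exists_mem_of_ne_nil _ (leaves_ne_nil r)
  have hyS : y.1 ∈ Sset := by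
    show y.1 ∈ (HCTree.node l r).leaves
    show y.1 ∈ l.leaves ++ r.leaves
    exact List.mem_append.mpr (Or.inl y.2)
  have hcS : c0 ∈ Sset := by
    show c0 ∈ l.leaves ++ r.leaves
    exact List.mem_append.mpr (Or.inr hc0)
  obtain ⟨w⟩ := hc.preconnected ⟨y.1, hyS⟩ ⟨c0, hcS⟩
  set Y : Set ↥Sset := {z : ↥Sset | (z : V) ∈ fB.leaves} with hY
  have hyY : (⟨y.1, hyS⟩ : ↥Sset) ∈ Y := by
    show y.1 ∈ fB.leaves
    rw [hfBl]
    exact List.mem_filter.mpr ⟨y.2, by simp [hq_def, hpy]⟩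
  have hcY : (⟨c0, hcS⟩ : ↥Sset) ∉ Y := by
    intro hmem
    have : c0 ∈ l.leaves := (hmemB c0 hmem).1
    exact hdisj c0 this hc0
  obtain ⟨d, _, hdf, hds⟩ := w.exists_boundary_dart Y hyY hcY
  have hdadj : G.Adj (d.toProd.1 : V) (d.toProd.2 : V) := d.adj
  have hbB : (d.toProd.1 : V) ∈ fB.leaves := hdf
  have hzR : (d.toProd.2 : V) ∈ r.leaves := by
    have hzS : (d.toProd.2 : V) ∈ l.leaves ++ r.leaves := d.toProd.2.2
    rcases List.mem_append.mp hzS with hz | hz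
    · exfalso
      rcases hb : p (d.toProd.2 : V) with _ | _
      · -- p z = false : z would be in fB.leaves
        apply hds
        show (d.toProd.2 : V) ∈ fB.leaves
        rw [hfBl]
        exact List.mem_filter.mpr ⟨hz, by simp [hq_def, hb]⟩
      · -- p z = true : an edge from the p-side to the non-p-side
        exact noAB _ hz _ (hmemB _ hbB).1 hb (hmemB _ hbB).2 (G.adj_symm hdadj)
    · exact hz
  have key6 : 0 < cross G fB.leaves r.leaves := cross_pos G hbB hzR hdadj
  -- cost facts
  have key1 : dcCost G fA + dcCost G fB ≤ dcCost G l := by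
    have h1 := filt_cost_le G p l noAB
    rw [hfA] at h1
    rw [show (fun v => !p v) = q from rfl, hfB] at h1
    exact h1
  have keyAB0 : cross G fA.leaves fB.leaves = 0 := by
    apply cross_eq_zero
    intro u hu v hv
    exact noAB u (hmemA u hu).1 v (hmemB v hv).1 (hmemA u hu).2 (hmemB v hv).2
  have key2 : cross G fA.leaves (fB.leaves ++ r.leaves) = cross G fA.leaves r.leaves := by
    rw [cross_append_right, keyAB0, Nat.zero_add]
  have hpermL : (fA.leaves ++ fB.leaves).Perm l.leaves := by
    rw [hfAl, hfBl]
    exact List.filter_append_perm p l.leaves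
  have key3 : cross G l.leaves r.leaves
      = cross G fA.leaves r.leaves + cross G fB.leaves r.leaves := by
    rw [← cross_perm_left G hpermL, cross_append_left]
  have key4 : fA.leaves.length + fB.leaves.length = l.leaves.length := by
    have := hpermL.length_eq; simpa using this
  have key5 : 0 < fA.leaves.length := by
    have hx : x.1 ∈ fA.leaves := by
      rw [hfAl]; exact List.mem_filter.mpr ⟨x.2, hpx⟩
    exact List.length_pos_iff.mpr (fun h => by simp [h] at hx)
  -- the cheaper subtree
  set s' : HCTree V := HCTree.node fA (HCTree.node fB r) with hs'
  have hnodeleaves : (HCTree.node fB r).leaves = fB.leaves ++ r.leaves := rfl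
  have hstrict : dcCost G s' < dcCost G (HCTree.node l r) := by
    rw [hs', dcCost_node G fA (HCTree.node fB r), dcCost_node G fB r, dcCost_node G l r,
      hnodeleaves, List.length_append, key2, key3, ← key4]
    nlinarith [key1, Nat.mul_pos key5 key6]
  have hpermS : s'.leaves.Perm ((HCTree.node l r).leaves) := by
    show (fA.leaves ++ (fB.leaves ++ r.leaves)).Perm (l.leaves ++ r.leaves)
    rw [← List.append_assoc]
    exact hpermL.append_right r.leaves
  obtain ⟨T', _, hpT, hcostT⟩ := replace G hsub s' hpermS
  refine ⟨T', ⟨hpT.nodup_iff.mpr hU.1, fun v => hpT.mem_iff.mpr (hU.2 v)⟩, ?_⟩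
  omega


lemma step (G : SimpleGraph V) (T : HCTree V) (hT : IsHCTree T)
    (hmin : ∀ T' : HCTree V, IsHCTree T' → dcCost G T ≤ dcCost G T')
    (l r : HCTree V) (hsub : Subtree (HCTree.node l r) T)
    (hc : (G.induce {v : V | v ∈ (HCTree.node l r).leaves}).Connected) :
    (G.induce {v : V | v ∈ l.leaves}).Connected ∧
      (G.induce {v : V | v ∈ r.leaves}).Connected := by
  constructor
  · by_contra hl
    obtain ⟨T', hT', hlt⟩ := main_aux G T hT l r hsub hc hl
    have := hmin T' hT'
    omega
  · by_contra hr
    have hperm : (HCTree.node r l).leaves.Perm ((HCTree.node l r).leaves) := by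
      show (r.leaves ++ l.leaves).Perm (l.leaves ++ r.leaves)
      exact List.perm_append_comm
    obtain ⟨T₂, hsub₂, hp₂, hcost₂⟩ := replace G hsub (HCTree.node r l) hperm
    have hT₂ : IsHCTree T₂ := ⟨hp₂.nodup_iff.mpr hT.1, fun v => hp₂.mem_iff.mpr (hT.2 v)⟩
    have hmirror : dcCost G (HCTree.node r l) = dcCost G (HCTree.node l r) := by
      rw [dcCost_node, dcCost_node, cross_comm]
      ring
    have hset : ({v : V | v ∈ (HCTree.node r l).leaves} : Set V)
        = {v : V | v ∈ (HCTree.node l r).leaves} := by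
      ext v
      show v ∈ r.leaves ++ l.leaves ↔ v ∈ l.leaves ++ r.leaves
      simp [List.mem_append, or_comm]
    obtain ⟨T', hT', hlt⟩ := main_aux G T₂ hT₂ r l hsub₂ (by rw [hset]; exact hc) hr
    have := hmin T' hT'
    omega

end HCAux

/-- Let `G` be connected and `(T, δ)` an HC-tree of `G` of minimum
DC-cost.  Then for every node `t` of `T`, the subgraph of `G` induced by the vertices
mapped to leaves of the subtree rooted at `t` is connected. -/
theorem minCost_subtree_connected {V : Type} [Fintype V] (G : SimpleGraph V)
    (hG : G.Connected) (T : HCTree V) (hT : IsHCTree T)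
    (hmin : ∀ T' : HCTree V, IsHCTree T' → dcCost G T ≤ dcCost G T')
    (s : HCTree V) (hs : Subtree s T) :
    (G.induce {v : V | v ∈ s.leaves}).Connected := by
  have base : (G.induce {v : V | v ∈ T.leaves}).Connected := by
    have huniv : {v : V | v ∈ T.leaves} = Set.univ := Set.eq_univ_of_forall hT.2
    rw [huniv]
    exact ((SimpleGraph.induceUnivIso G).connected_iff).mpr hG
  suffices h : ∀ s t : HCTree V, Subtree s t → Subtree t T →
      (G.induce {v : V | v ∈ t.leaves}).Connected →
      (G.induce {v : V | v ∈ s.leaves}).Connected by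
    exact h s T hs (Subtree.refl T) base
  intro s t h
  induction h with
  | refl t => exact fun _ hc => hc
  | @left l r u h ih =>
    intro hsub hc
    exact ih (HCAux.subtree_trans (Subtree.left (Subtree.refl l)) hsub)
      ((HCAux.step G T hT hmin l r hsub hc).1)
  | @right l r u h ih =>
    intro hsub hc
    exact ih (HCAux.subtree_trans (Subtree.right (Subtree.refl r)) hsub)
      ((HCAux.step G T hT hmin l r hsub hc).2)
end

section
/- Let G1 and G2 be graphs on disjoint vertex sets. Then the minimum DC-cost over all HC-trees of the disjoint union G1 ⊔ G2 equals the minimum DC-cost over all HC-trees of G1 plus the minimum DC-cost over all HC-trees of G2. In particular, for every graph G and every k ≥ 1, the minimum DC-cost over all HC-trees of the disjoint union G^{(k)} of k copies of G equals k times the minimum DC-cost over all HC-trees of G. -/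
open HCTree

/-- The disjoint union of two graphs on disjoint vertex sets, on the sum type. -/
def disjUnion {V1 V2 : Type} (G1 : SimpleGraph V1) (G2 : SimpleGraph V2) :
    SimpleGraph (V1 ⊕ V2) where
  Adj a b := Sum.LiftRel G1.Adj G2.Adj a b
  symm := by
    constructor
    intro a b h
    cases h with
    | inl h => exact Sum.LiftRel.inl h.symm
    | inr h => exact Sum.LiftRel.inr h.symm
  loopless := by
    constructor
    intro a h
    cases h with
    | inl h => exact G1.loopless.irrefl _ h
    | inr h => exact G2.loopless.irrefl _ h

section Aux

open Classical

namespace HCTree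

/-- Relabel the leaves of an HC-tree. -/
def mapT {V W : Type} (f : V → W) : HCTree V → HCTree W
  | leaf v => leaf (f v)
  | node l r => node (mapT f l) (mapT f r)

lemma leaves_mapT {V W : Type} (f : V → W) (T : HCTree V) :
    (mapT f T).leaves = T.leaves.map f := by
  induction T with
  | leaf v => rfl
  | node l r ihl ihr => simp [mapT, leaves, ihl, ihr]

lemma leaves_ne_nil {V : Type} (T : HCTree V) : T.leaves ≠ [] := by
  induction T with
  | leaf v => simp [leaves]
  | node l r ihl ihr => simp [leaves, ihl]

lemma dcCost_mapT {V W : Type} (f : V → W) (G : SimpleGraph V) (G' : SimpleGraph W)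
    (h : ∀ u v, G'.Adj (f u) (f v) ↔ G.Adj u v) (T : HCTree V) :
    dcCost G' (mapT f T) = dcCost G T := by
  induction T with
  | leaf v => rfl
  | node l r ihl ihr =>
    simp only [mapT, dcCost, ihl, ihr, leaves_mapT, List.length_map, List.map_map]
    congr 2
    apply congrArg List.sum
    apply List.map_congr_left
    intro u _
    simp only [Function.comp, List.countP_map]
    apply List.countP_congr
    intro v _
    simp [h]

lemma isHCTree_mapT {V W : Type} (e : V ≃ W) {T : HCTree V} (hT : IsHCTree T) :
    IsHCTree (mapT e T) := by
  constructor
  · rw [leaves_mapT]; exact hT.1.map e.injective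
  · intro w
    rw [leaves_mapT, List.mem_map]
    exact ⟨e.symm w, hT.2 _, by simp⟩

/-- Restrict an HC-tree along a partial relabelling, suppressing unary nodes. -/
def restrict {V W : Type} (f : V → Option W) : HCTree V → Option (HCTree W)
  | leaf v => (f v).map leaf
  | node l r =>
    match restrict f l, restrict f r with
    | some a, some b => some (node a b)
    | some a, none => some a
    | none, some b => some b
    | none, none => none

def oleaves {W : Type} : Option (HCTree W) → List W
  | none => []
  | some T => T.leaves

noncomputable def odc {W : Type} (G : SimpleGraph W) : Option (HCTree W) → ℕ
  | none => 0
  | some T => dcCost G T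

lemma oleaves_restrict {V W : Type} (f : V → Option W) (T : HCTree V) :
    oleaves (restrict f T) = T.leaves.filterMap f := by
  induction T with
  | leaf v =>
    simp only [restrict, leaves, List.filterMap_cons]
    cases f v <;> simp [oleaves, leaves]
  | node l r ihl ihr =>
    simp only [restrict, leaves, List.filterMap_append, ← ihl, ← ihr]
    rcases restrict f l with _ | a <;> rcases restrict f r with _ | b <;>
      simp [oleaves, leaves]

lemma odc_node_le {V W : Type} (G : SimpleGraph W) (f : V → Option W) (l r : HCTree V) :
    odc G (restrict f (node l r)) ≤ odc G (restrict f l) + odc G (restrict f r)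
      + (l.leaves.length + r.leaves.length) *
        ((l.leaves.filterMap f).map (fun u =>
          (r.leaves.filterMap f).countP (fun v => decide (G.Adj u v)))).sum := by
  have hl := oleaves_restrict f l
  have hr := oleaves_restrict f r
  rcases h1 : restrict f l with _ | a <;> rcases h2 : restrict f r with _ | b <;>
      rw [h1] at hl <;> rw [h2] at hr <;>
      simp only [oleaves] at hl hr <;>
      simp only [restrict, h1, h2, odc, ← hl, ← hr]
  · exact Nat.zero_le _
  · simp
  · simp
  · simp only [dcCost]
    have hle : a.leaves.length + b.leaves.length ≤ l.leaves.length + r.leaves.length := by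
      rw [hl, hr]
      exact Nat.add_le_add (List.length_filterMap_le _ _) (List.length_filterMap_le _ _)
    exact Nat.add_le_add_left (Nat.mul_le_mul_right _ hle) _

lemma countP_left {V1 V2 : Type} (G1 : SimpleGraph V1) (G2 : SimpleGraph V2)
    (u : V1) (R : List (V1 ⊕ V2)) :
    R.countP (fun v => decide ((disjUnion G1 G2).Adj (Sum.inl u) v))
      = (R.filterMap Sum.getLeft?).countP (fun v => decide (G1.Adj u v)) := by
  induction R with
  | nil => rfl
  | cons a R ih =>
    cases a with
    | inl a =>
      have h : (disjUnion G1 G2).Adj (Sum.inl u) (Sum.inl a) ↔ G1.Adj u a :=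
        Sum.liftRel_inl_inl
      simp [List.countP_cons, List.filterMap_cons, ih, h]
    | inr a =>
      have h : ¬ (disjUnion G1 G2).Adj (Sum.inl u) (Sum.inr a) := fun h => by cases h
      simp [List.countP_cons, List.filterMap_cons, ih, h]

lemma countP_right {V1 V2 : Type} (G1 : SimpleGraph V1) (G2 : SimpleGraph V2)
    (u : V2) (R : List (V1 ⊕ V2)) :
    R.countP (fun v => decide ((disjUnion G1 G2).Adj (Sum.inr u) v))
      = (R.filterMap Sum.getRight?).countP (fun v => decide (G2.Adj u v)) := by
  induction R with
  | nil => rfl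
  | cons a R ih =>
    cases a with
    | inl a =>
      have h : ¬ (disjUnion G1 G2).Adj (Sum.inr u) (Sum.inl a) := fun h => by cases h
      simp [List.countP_cons, List.filterMap_cons, ih, h]
    | inr a =>
      have h : (disjUnion G1 G2).Adj (Sum.inr u) (Sum.inr a) ↔ G2.Adj u a :=
        Sum.liftRel_inr_inr
      simp [List.countP_cons, List.filterMap_cons, ih, h]

lemma sum_split {V1 V2 : Type} (G1 : SimpleGraph V1) (G2 : SimpleGraph V2)
    (L R : List (V1 ⊕ V2)) :
    (L.map (fun u => R.countP (fun v => decide ((disjUnion G1 G2).Adj u v)))).sum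
      = ((L.filterMap Sum.getLeft?).map (fun u =>
            (R.filterMap Sum.getLeft?).countP (fun v => decide (G1.Adj u v)))).sum
        + ((L.filterMap Sum.getRight?).map (fun u =>
            (R.filterMap Sum.getRight?).countP (fun v => decide (G2.Adj u v)))).sum := by
  induction L with
  | nil => rfl
  | cons a L ih =>
    cases a with
    | inl a =>
      simp only [List.filterMap_cons, List.map_cons, List.sum_cons, ih,
        Sum.getLeft?_inl, Sum.getRight?_inl, countP_left]
      omega
    | inr a =>
      simp only [List.filterMap_cons, List.map_cons, List.sum_cons, ih,
        Sum.getLeft?_inr, Sum.getRight?_inr, countP_right]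
      omega

lemma key {V1 V2 : Type} (G1 : SimpleGraph V1) (G2 : SimpleGraph V2)
    (T : HCTree (V1 ⊕ V2)) :
    odc G1 (restrict Sum.getLeft? T) + odc G2 (restrict Sum.getRight? T)
      ≤ dcCost (disjUnion G1 G2) T := by
  induction T with
  | leaf v => cases v <;> simp [restrict, odc, dcCost]
  | node l r ihl ihr =>
    have h1 := odc_node_le G1 Sum.getLeft? l r
    have h2 := odc_node_le G2 Sum.getRight? l r
    have hs := sum_split G1 G2 l.leaves r.leaves
    have := Nat.add_le_add h1 h2
    refine le_trans this ?_
    simp only [dcCost, hs, Nat.mul_add]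
    omega

end HCTree

/-- Transfer of `IsMinCost` along a graph isomorphism. -/
lemma IsMinCost.congr {V W : Type} {G : SimpleGraph V} {G' : SimpleGraph W} (e : V ≃ W)
    (h : ∀ u v, G'.Adj (e u) (e v) ↔ G.Adj u v) {c : ℕ}
    (hc : IsMinCost G c) : IsMinCost G' c := by
  obtain ⟨⟨T, hT, hTc⟩, hmin⟩ := hc
  constructor
  · exact ⟨mapT e T, isHCTree_mapT e hT, by rw [dcCost_mapT e G G' h, hTc]⟩
  · intro T' hT'
    have h2 : ∀ u v, G.Adj (e.symm u) (e.symm v) ↔ G'.Adj u v := fun u v => by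
      rw [← h]; simp
    have := hmin (mapT e.symm T') (isHCTree_mapT e.symm hT')
    rwa [dcCost_mapT _ _ _ h2] at this

lemma cross_zero {V1 V2 : Type} (G1 : SimpleGraph V1) (G2 : SimpleGraph V2)
    (T1 : HCTree V1) (T2 : HCTree V2) :
    ((mapT Sum.inl T1).leaves.map (fun u =>
      (mapT Sum.inr T2).leaves.countP
        (fun v => decide ((disjUnion G1 G2).Adj u v)))).sum = 0 := by
  apply List.sum_eq_zero
  intro x hx
  simp only [leaves_mapT, List.map_map, List.mem_map, Function.comp] at hx
  obtain ⟨u, _, rfl⟩ := hx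
  rw [List.countP_map]
  apply List.countP_eq_zero.mpr
  intro v _
  simp only [Function.comp_apply, decide_eq_true_eq]
  exact fun h => by cases h

def oneEquiv (V : Type) : V ≃ V × Fin 1 where
  toFun v := (v, 0)
  invFun p := p.1
  left_inv v := rfl
  right_inv p := by
    obtain ⟨v, i⟩ := p
    simp [Subsingleton.elim (0 : Fin 1) i]

lemma oneEquiv_adj {V : Type} (G : SimpleGraph V) (u v : V) :
    (copies G 1).Adj (oneEquiv V u) (oneEquiv V v) ↔ G.Adj u v := by
  show ((0 : Fin 1) = 0 ∧ G.Adj u v) ↔ G.Adj u v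
  simp

def succEquiv (V : Type) (k : ℕ) : (V × Fin k) ⊕ V ≃ V × Fin (k + 1) where
  toFun := Sum.elim (fun p => (p.1, p.2.castSucc)) (fun v => (v, Fin.last k))
  invFun p := if h : (p.2 : ℕ) < k then Sum.inl (p.1, ⟨p.2, h⟩) else Sum.inr p.1
  left_inv := by
    rintro (⟨v, i⟩ | v)
    · simp [i.is_lt]
    · simp
  right_inv := by
    rintro ⟨v, j⟩
    by_cases h : (j : ℕ) < k
    · simp only [dif_pos h, Sum.elim_inl]
      have hc : (⟨(j : ℕ), h⟩ : Fin k).castSucc = j := by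
        ext
        simp
      rw [hc]
    · simp only [dif_neg h, Sum.elim_inr]
      have hj : j = Fin.last k := by
        apply Fin.ext
        have := j.is_lt
        simp only [Fin.val_last]
        omega
      rw [hj]

lemma succEquiv_adj {V : Type} (G : SimpleGraph V) (k : ℕ) (a b : (V × Fin k) ⊕ V) :
    (copies G (k + 1)).Adj (succEquiv V k a) (succEquiv V k b) ↔
      (disjUnion (copies G k) G).Adj a b := by
  rcases a with ⟨u, i⟩ | u <;> rcases b with ⟨v, j⟩ | v
  · show (i.castSucc = j.castSucc ∧ G.Adj u v) ↔ _
    rw [Fin.castSucc_inj]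
    constructor
    · rintro ⟨h1, h2⟩
      exact Sum.LiftRel.inl ⟨h1, h2⟩
    · intro h
      cases h with
      | inl h => exact ⟨h.1, h.2⟩
  · show (i.castSucc = Fin.last k ∧ G.Adj u v) ↔ _
    constructor
    · rintro ⟨h1, _⟩
      exact absurd h1 (Fin.castSucc_lt_last i).ne
    · intro h; cases h
  · show (Fin.last k = j.castSucc ∧ G.Adj u v) ↔ _
    constructor
    · rintro ⟨h1, _⟩
      exact absurd h1.symm (Fin.castSucc_lt_last j).ne
    · intro h; cases h
  · show (Fin.last k = Fin.last k ∧ G.Adj u v) ↔ _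
    constructor
    · rintro ⟨_, h⟩
      exact Sum.LiftRel.inr h
    · intro h
      cases h with
      | inr h => exact ⟨rfl, h⟩

end Aux

/-- The minimum DC-cost over HC-trees of a disjoint union `G1 ⊔ G2`
is the sum of the minimum DC-costs of `G1` and `G2`.  In particular, for every graph `G`
and every `k ≥ 1`, the minimum DC-cost over HC-trees of the disjoint union `G^(k)` of
`k` copies of `G` is `k` times the minimum DC-cost of `G`. -/
theorem minCost_disjUnion :
    (∀ (V1 V2 : Type) (G1 : SimpleGraph V1) (G2 : SimpleGraph V2) (W1 W2 : ℕ),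
      IsMinCost G1 W1 → IsMinCost G2 W2 → IsMinCost (disjUnion G1 G2) (W1 + W2)) ∧
    (∀ (V : Type) (G : SimpleGraph V) (W k : ℕ), 1 ≤ k → IsMinCost G W →
      IsMinCost (copies G k) (k * W)) := by
  have part1 : ∀ (V1 V2 : Type) (G1 : SimpleGraph V1) (G2 : SimpleGraph V2) (W1 W2 : ℕ),
      IsMinCost G1 W1 → IsMinCost G2 W2 → IsMinCost (disjUnion G1 G2) (W1 + W2) := by
    intro V1 V2 G1 G2 W1 W2 h1 h2
    obtain ⟨⟨T1, hT1, hc1⟩, hmin1⟩ := h1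
    obtain ⟨⟨T2, hT2, hc2⟩, hmin2⟩ := h2
    constructor
    · refine ⟨node (mapT Sum.inl T1) (mapT Sum.inr T2), ⟨?_, ?_⟩, ?_⟩
      · simp only [leaves, leaves_mapT]
        rw [List.nodup_append]
        refine ⟨hT1.1.map Sum.inl_injective, hT2.1.map Sum.inr_injective, ?_⟩
        intro a ha b hb
        simp only [List.mem_map] at ha hb
        obtain ⟨u, _, rfl⟩ := ha
        obtain ⟨v, _, rfl⟩ := hb
        simp
      · intro v
        simp only [leaves, leaves_mapT, List.mem_append, List.mem_map]
        cases v with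
        | inl v => exact Or.inl ⟨v, hT1.2 v, rfl⟩
        | inr v => exact Or.inr ⟨v, hT2.2 v, rfl⟩
      · have hz := cross_zero G1 G2 T1 T2
        simp only [dcCost, hz, Nat.mul_zero, Nat.add_zero]
        rw [dcCost_mapT Sum.inl G1 _ (fun u v => by simp [disjUnion]),
          dcCost_mapT Sum.inr G2 _ (fun u v => by simp [disjUnion]), hc1, hc2]
    · intro T hT
      have v1 : V1 := T1.leaves.head (leaves_ne_nil T1)
      have v2 : V2 := T2.leaves.head (leaves_ne_nil T2)
      have hAl := oleaves_restrict Sum.getLeft? T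
      have hAr := oleaves_restrict Sum.getRight? T
      have hmeml : v1 ∈ oleaves (restrict Sum.getLeft? T) := by
        rw [hAl]; exact List.mem_filterMap.mpr ⟨Sum.inl v1, hT.2 _, rfl⟩
      have hmemr : v2 ∈ oleaves (restrict Sum.getRight? T) := by
        rw [hAr]; exact List.mem_filterMap.mpr ⟨Sum.inr v2, hT.2 _, rfl⟩
      rcases hA : restrict Sum.getLeft? T with _ | TA
      · rw [hA] at hmeml; cases hmeml
      rcases hB : restrict Sum.getRight? T with _ | TB
      · rw [hB] at hmemr; cases hmemr
      rw [hA] at hAl; rw [hB] at hAr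
      simp only [oleaves] at hAl hAr
      have hTA : IsHCTree TA := by
        constructor
        · rw [hAl]
          exact hT.1.filterMap (by
            intro a a' b hb hb'
            cases a <;> cases a' <;> simp_all)
        · intro v
          rw [hAl]
          exact List.mem_filterMap.mpr ⟨Sum.inl v, hT.2 _, rfl⟩
      have hTB : IsHCTree TB := by
        constructor
        · rw [hAr]
          exact hT.1.filterMap (by
            intro a a' b hb hb'
            cases a <;> cases a' <;> simp_all)
        · intro v
          rw [hAr]
          exact List.mem_filterMap.mpr ⟨Sum.inr v, hT.2 _, rfl⟩
      have hk := key G1 G2 T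
      rw [hA, hB] at hk
      simp only [odc] at hk
      exact le_trans (Nat.add_le_add (hmin1 TA hTA) (hmin2 TB hTB)) hk
  refine ⟨part1, ?_⟩
  intro V G W k hk hW
  induction k, hk using Nat.le_induction with
  | base =>
    have := hW.congr (oneEquiv V) (oneEquiv_adj G)
    rwa [one_mul]
  | succ k hk1 ih =>
    have hd := part1 (V × Fin k) V (copies G k) G (k * W) W ih hW
    have := hd.congr (succEquiv V k) (succEquiv_adj G k)
    rwa [Nat.succ_mul]
end

section
/- Let φ be a NAESAT* instance with n variables and m = n/3 three-clauses, and let G'' be the subgraph of the Dasgupta graph of φ consisting of all 2n literal vertices together with the matching edges and the 3-clause edges (omitting the 2-clause edges). Then G'' is a disjoint union of m copies of the prism, one for each 3-clause. In particular, every vertex of the full Dasgupta graph G of φ has degree at most 5. -/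
open HCTree

/-- A literal over `n` variables: a variable together with a polarity
(`true` = positive occurrence). -/
abbrev Lit (n : ℕ) := Fin n × Bool

/-- The negation of a literal. -/
def Lit.neg {n : ℕ} (l : Lit n) : Lit n := (l.1, !l.2)

/-- A NAESAT* instance over `n` variables: a CNF formula whose clauses have two or three
literals each (over pairwise distinct variables), where every variable appears in exactly
one 3-clause, every literal appears in at most one 2-clause (so each variable has at most
one positive and at most one negative appearance in 2-clauses), no 2-clause nor its copy
with polarities reversed is contained in a 3-clause, and no two 2-clauses are
polarity-reversed copies of each other. -/
structure NAESATStar (n : ℕ) where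
  threeClauses : Finset (Finset (Lit n))
  twoClauses : Finset (Finset (Lit n))
  three_card : ∀ c ∈ threeClauses, c.card = 3
  two_card : ∀ c ∈ twoClauses, c.card = 2
  three_distinct_vars : ∀ c ∈ threeClauses, ∀ l ∈ c, ∀ l' ∈ c, l.1 = l'.1 → l = l'
  two_distinct_vars : ∀ c ∈ twoClauses, ∀ l ∈ c, ∀ l' ∈ c, l.1 = l'.1 → l = l'
  var_in_unique_threeClause :
    ∀ x : Fin n, ∃! c, c ∈ threeClauses ∧ ∃ b : Bool, (x, b) ∈ c
  lit_in_atMostOne_twoClause :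
    ∀ l : Lit n, ∀ c ∈ twoClauses, ∀ c' ∈ twoClauses, l ∈ c → l ∈ c' → c = c'
  two_not_inside_three :
    ∀ c ∈ twoClauses, ∀ c' ∈ threeClauses, ¬ c ⊆ c' ∧ ¬ c.image Lit.neg ⊆ c'
  no_reversed_twoClauses :
    ∀ c ∈ twoClauses, ∀ c' ∈ twoClauses, c' ≠ c.image Lit.neg

/-- The Dasgupta graph of a NAESAT* instance `φ`: one vertex per literal; a matching edge
`x x̄` for every variable `x`; for every 2-clause `(l1 ∨ l2)` the two edges `l1 l2` and
`l̄1 l̄2`; and for every 3-clause `(l1 ∨ l2 ∨ l3)` the triangles `l1 l2 l3` and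
`l̄1 l̄2 l̄3`. -/
def dasguptaGraph {n : ℕ} (φ : NAESATStar n) : SimpleGraph (Lit n) :=
  SimpleGraph.fromRel (fun a b =>
    a.1 = b.1 ∨
    (∃ c ∈ φ.twoClauses, (a ∈ c ∧ b ∈ c) ∨ (Lit.neg a ∈ c ∧ Lit.neg b ∈ c)) ∨
    (∃ c ∈ φ.threeClauses, (a ∈ c ∧ b ∈ c) ∨ (Lit.neg a ∈ c ∧ Lit.neg b ∈ c)))

/-- The prism graph `P` (the complement of the 6-cycle): two vertex-disjoint triangles
`{0,1,2}` and `{3,4,5}` together with the three matching edges `0-3`, `1-4`, `2-5`. -/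
def Prism : SimpleGraph (Fin 6) :=
  SimpleGraph.fromRel (fun a b =>
    (a.val < 3 ∧ b.val < 3) ∨ (3 ≤ a.val ∧ 3 ≤ b.val) ∨ b.val = a.val + 3)

/-- The subgraph `G''` of the Dasgupta graph of `φ` consisting of all literal vertices
together with the matching edges and the 3-clause edges (omitting the 2-clause edges). -/
def matchingThreeGraph {n : ℕ} (φ : NAESATStar n) : SimpleGraph (Lit n) :=
  SimpleGraph.fromRel (fun a b =>
    a.1 = b.1 ∨
    (∃ c ∈ φ.threeClauses, (a ∈ c ∧ b ∈ c) ∨ (Lit.neg a ∈ c ∧ Lit.neg b ∈ c)))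

section Aux

lemma bool_neg_iff (x y : Bool) : ((!x) = y) ↔ ¬(x = y) := by revert x y; decide

namespace NAESATStarAux

lemma neg_neg_lit {n : ℕ} (l : Lit n) : Lit.neg (Lit.neg l) = l := by
  simp [Lit.neg]

lemma neg_lit_inj {n : ℕ} {a b : Lit n} (h : Lit.neg a = Lit.neg b) : a = b := by
  rw [← neg_neg_lit a, h, neg_neg_lit]

variable {n : ℕ} (φ : NAESATStar n)

noncomputable def clauseOf (x : Fin n) : Finset (Lit n) :=
  (φ.var_in_unique_threeClause x).choose

lemma clauseOf_mem (x : Fin n) : clauseOf φ x ∈ φ.threeClauses :=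
  (φ.var_in_unique_threeClause x).choose_spec.1.1

lemma clauseOf_exists (x : Fin n) : ∃ b, (x, b) ∈ clauseOf φ x :=
  (φ.var_in_unique_threeClause x).choose_spec.1.2

lemma clauseOf_eq {x : Fin n} {c : Finset (Lit n)} (hc : c ∈ φ.threeClauses)
    {b : Bool} (h : (x, b) ∈ c) : c = clauseOf φ x :=
  ((φ.var_in_unique_threeClause x).choose_spec.2 c ⟨hc, b, h⟩)

noncomputable def polOf (x : Fin n) : Bool := (clauseOf_exists φ x).choose

lemma litOf_mem (x : Fin n) : (x, polOf φ x) ∈ clauseOf φ x :=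
  (clauseOf_exists φ x).choose_spec

lemma pol_eq {x : Fin n} {b : Bool} (h : (x, b) ∈ clauseOf φ x) : b = polOf φ x := by
  have := φ.three_distinct_vars _ (clauseOf_mem φ x) _ h _ (litOf_mem φ x) rfl
  exact congrArg Prod.snd this

lemma mem_three_iff {a : Lit n} {c : Finset (Lit n)} (hc : c ∈ φ.threeClauses) :
    a ∈ c ↔ c = clauseOf φ a.1 ∧ a.2 = polOf φ a.1 := by
  constructor
  · intro h
    have h' : (a.1, a.2) ∈ c := by simpa using h
    have h1 := clauseOf_eq φ hc h'
    rw [h1] at h'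
    exact ⟨h1, pol_eq φ h'⟩
  · rintro ⟨rfl, h2⟩
    have := litOf_mem φ a.1
    rw [← h2] at this; simpa using this

noncomputable def cl (x : Fin n) : List (Lit n) := (clauseOf φ x).toList

lemma cl_length (x : Fin n) : (cl φ x).length = 3 := by
  rw [cl, Finset.length_toList]; exact φ.three_card _ (clauseOf_mem φ x)

lemma exists_idx (x : Fin n) :
    ∃ i : Fin (cl φ x).length, (cl φ x).get i = (x, polOf φ x) :=
  List.mem_iff_get.1 (by rw [cl, Finset.mem_toList]; exact litOf_mem φ x)

noncomputable def idxF (x : Fin n) : Fin (cl φ x).length := (exists_idx φ x).choose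

lemma get_idxF (x : Fin n) : (cl φ x).get (idxF φ x) = (x, polOf φ x) :=
  (exists_idx φ x).choose_spec

noncomputable def idxOf (x : Fin n) : ℕ := (idxF φ x).val

lemma idx_lt (x : Fin n) : idxOf φ x < 3 := by
  have h1 := (idxF φ x).isLt
  have h2 := cl_length φ x
  show (idxF φ x).val < 3
  omega

lemma get_congr : ∀ (L L' : List (Lit n)) (_ : L = L') (i : Fin L.length)
    (j : Fin L'.length), i.val = j.val → L.get i = L'.get j := by
  rintro L L' rfl i j hij
  exact congrArg _ (Fin.ext hij)

lemma idx_inj {x y : Fin n} (hC : clauseOf φ x = clauseOf φ y)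
    (h : idxOf φ x = idxOf φ y) : x = y := by
  have hcl : cl φ x = cl φ y := by rw [cl, cl, hC]
  have e3 : (x, polOf φ x) = ((y, polOf φ y) : Lit n) :=
    (get_idxF φ x).symm.trans
      ((get_congr _ _ hcl (idxF φ x) (idxF φ y) h).trans (get_idxF φ y))
  exact congrArg Prod.fst e3

variable {m : ℕ}

noncomputable def cIdx (hm : m = φ.threeClauses.card) (x : Fin n) : Fin m :=
  Fin.cast hm.symm (φ.threeClauses.equivFin ⟨clauseOf φ x, clauseOf_mem φ x⟩)

lemma cIdx_eq_iff (hm : m = φ.threeClauses.card) (x y : Fin n) :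
    cIdx φ hm x = cIdx φ hm y ↔ clauseOf φ x = clauseOf φ y := by
  unfold cIdx
  constructor
  · intro h
    have hval := congrArg Fin.val h
    rw [Fin.coe_cast, Fin.coe_cast] at hval
    have h2 : φ.threeClauses.equivFin ⟨clauseOf φ x, clauseOf_mem φ x⟩
        = φ.threeClauses.equivFin ⟨clauseOf φ y, clauseOf_mem φ y⟩ :=
      Fin.ext hval
    have h3 := φ.threeClauses.equivFin.injective h2
    exact congrArg Subtype.val h3
  · intro h
    have h4 : (⟨clauseOf φ x, clauseOf_mem φ x⟩ : {c // c ∈ φ.threeClauses})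
        = ⟨clauseOf φ y, clauseOf_mem φ y⟩ := Subtype.ext h
    rw [h4]

noncomputable def fwd (hm : m = φ.threeClauses.card) (a : Lit n) : Fin 6 × Fin m :=
  (⟨idxOf φ a.1 + (if a.2 = polOf φ a.1 then 0 else 3), by
      have := idx_lt φ a.1; split <;> omega⟩, cIdx φ hm a.1)

lemma fwd_bij (hm : m = φ.threeClauses.card) (hnm : n = 3 * m) :
    Function.Bijective (fwd φ hm) := by
  rw [Fintype.bijective_iff_injective_and_card]
  constructor
  · intro a b hab
    have hC : clauseOf φ a.1 = clauseOf φ b.1 := by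
      rw [← cIdx_eq_iff φ hm]
      exact congrArg Prod.snd hab
    have hval : idxOf φ a.1 + (if a.2 = polOf φ a.1 then 0 else 3)
        = idxOf φ b.1 + (if b.2 = polOf φ b.1 then 0 else 3) :=
      congrArg (fun p => (p.1 : ℕ)) hab
    have hka := idx_lt φ a.1
    have hkb := idx_lt φ b.1
    by_cases hsa : a.2 = polOf φ a.1 <;> by_cases hsb : b.2 = polOf φ b.1
    · rw [if_pos hsa, if_pos hsb] at hval
      have hv : a.1 = b.1 := idx_inj φ hC (by omega)
      exact Prod.ext hv (by rw [hsa, hsb, hv])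
    · rw [if_pos hsa, if_neg hsb] at hval; omega
    · rw [if_neg hsa, if_pos hsb] at hval; omega
    · rw [if_neg hsa, if_neg hsb] at hval
      have hv : a.1 = b.1 := idx_inj φ hC (by omega)
      refine Prod.ext hv ?_
      have ha' : a.2 = !(polOf φ a.1) := by
        cases ha2 : a.2 <;> cases hpa : polOf φ a.1 <;> simp_all
      have hb' : b.2 = !(polOf φ b.1) := by
        cases hb2 : b.2 <;> cases hpb : polOf φ b.1 <;> simp_all
      rw [ha', hb', hv]
  · have h1 : Fintype.card (Lit n) = n * 2 := by simp
    have h2 : Fintype.card (Fin 6 × Fin m) = 6 * m := by simp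
    rw [h1, h2]; omega

lemma prism_adj (p q : Fin 6) : Prism.Adj p q ↔ p.val ≠ q.val ∧
    ((p.val < 3 ∧ q.val < 3) ∨ (3 ≤ p.val ∧ 3 ≤ q.val) ∨
      q.val = p.val + 3 ∨ p.val = q.val + 3) := by
  simp only [Prism, SimpleGraph.fromRel_adj, ne_eq, Fin.ext_iff]
  omega

lemma mt_adj (a b : Lit n) : (matchingThreeGraph φ).Adj a b ↔
    a ≠ b ∧ (a.1 = b.1 ∨ (clauseOf φ a.1 = clauseOf φ b.1 ∧
      ((a.2 = polOf φ a.1) ↔ (b.2 = polOf φ b.1)))) := by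
  simp only [matchingThreeGraph, SimpleGraph.fromRel_adj, ne_eq]
  constructor
  · rintro ⟨hne, h⟩
    refine ⟨hne, ?_⟩
    have key : ∀ u v : Lit n,
        (u.1 = v.1 ∨ ∃ c ∈ φ.threeClauses,
          (u ∈ c ∧ v ∈ c) ∨ (Lit.neg u ∈ c ∧ Lit.neg v ∈ c)) →
        (u.1 = v.1 ∨ (clauseOf φ u.1 = clauseOf φ v.1 ∧
          ((u.2 = polOf φ u.1) ↔ (v.2 = polOf φ v.1)))) := by
      rintro u v (h1 | ⟨c, hc, ⟨hu, hv⟩ | ⟨hu, hv⟩⟩)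
      · exact Or.inl h1
      · rw [mem_three_iff φ hc] at hu hv
        exact Or.inr ⟨hu.1.symm.trans hv.1, iff_of_true hu.2 hv.2⟩
      · rw [mem_three_iff φ hc] at hu hv
        have hu2 : ¬ (u.2 = polOf φ u.1) := (bool_neg_iff _ _).1 hu.2
        have hv2 : ¬ (v.2 = polOf φ v.1) := (bool_neg_iff _ _).1 hv.2
        exact Or.inr ⟨hu.1.symm.trans hv.1, iff_of_false hu2 hv2⟩
    rcases h with h | h
    · exact key a b h
    · rcases key b a h with h1 | ⟨h1, h2⟩
      · exact Or.inl h1.symm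
      · exact Or.inr ⟨h1.symm, h2.symm⟩
  · rintro ⟨hne, h1 | ⟨hC, hpol⟩⟩
    · exact ⟨hne, Or.inl (Or.inl h1)⟩
    · refine ⟨hne, Or.inl (Or.inr ⟨clauseOf φ a.1, clauseOf_mem φ a.1, ?_⟩)⟩
      by_cases hsa : a.2 = polOf φ a.1
      · left
        exact ⟨(mem_three_iff φ (clauseOf_mem φ a.1)).2 ⟨rfl, hsa⟩,
          (mem_three_iff φ (clauseOf_mem φ a.1)).2 ⟨hC, hpol.1 hsa⟩⟩
      · right
        have hsb : ¬ (b.2 = polOf φ b.1) := fun h => hsa (hpol.2 h)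
        exact ⟨(mem_three_iff φ (clauseOf_mem φ a.1)).2 ⟨rfl, (bool_neg_iff _ _).2 hsa⟩,
          (mem_three_iff φ (clauseOf_mem φ a.1)).2 ⟨hC, (bool_neg_iff _ _).2 hsb⟩⟩

lemma adj_iff (hm : m = φ.threeClauses.card) (a b : Lit n) :
    (copies Prism m).Adj (fwd φ hm a) (fwd φ hm b) ↔ (matchingThreeGraph φ).Adj a b := by
  rw [mt_adj]
  have hA : (copies Prism m).Adj (fwd φ hm a) (fwd φ hm b)
      ↔ ((fwd φ hm a).2 = (fwd φ hm b).2 ∧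
          Prism.Adj (fwd φ hm a).1 (fwd φ hm b).1) := Iff.rfl
  rw [hA, prism_adj]
  have h2 : (fwd φ hm a).2 = cIdx φ hm a.1 := rfl
  have h2' : (fwd φ hm b).2 = cIdx φ hm b.1 := rfl
  have h1 : ((fwd φ hm a).1 : ℕ) = idxOf φ a.1 + (if a.2 = polOf φ a.1 then 0 else 3) := rfl
  have h1' : ((fwd φ hm b).1 : ℕ) = idxOf φ b.1 + (if b.2 = polOf φ b.1 then 0 else 3) := rfl
  rw [h2, h2', h1, h1', cIdx_eq_iff]
  have hka := idx_lt φ a.1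
  have hkb := idx_lt φ b.1
  by_cases hsa : a.2 = polOf φ a.1 <;> by_cases hsb : b.2 = polOf φ b.1
  · rw [if_pos hsa, if_pos hsb]
    constructor
    · rintro ⟨hC, hne, -⟩
      have hv : a.1 ≠ b.1 := fun h => hne (by rw [h])
      exact ⟨fun h => hv (congrArg Prod.fst h), Or.inr ⟨hC, iff_of_true hsa hsb⟩⟩
    · rintro ⟨hab, h | ⟨hC, -⟩⟩
      · exact absurd (Prod.ext h (by rw [hsa, hsb, h])) hab
      · refine ⟨hC, ?_, Or.inl ⟨by omega, by omega⟩⟩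
        intro h
        have hv : a.1 = b.1 := idx_inj φ hC (by omega)
        exact hab (Prod.ext hv (by rw [hsa, hsb, hv]))
  · rw [if_pos hsa, if_neg hsb]
    constructor
    · rintro ⟨hC, hne, hd⟩
      have hk : idxOf φ a.1 = idxOf φ b.1 := by omega
      have hv := idx_inj φ hC hk
      refine ⟨?_, Or.inl hv⟩
      intro h; rw [h] at hsa; exact hsb hsa
    · rintro ⟨hab, h | ⟨hC, hiff⟩⟩
      · have hC : clauseOf φ a.1 = clauseOf φ b.1 := by rw [h]
        have hk : idxOf φ a.1 = idxOf φ b.1 := by rw [h]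
        exact ⟨hC, by omega, by omega⟩
      · exact absurd (hiff.1 hsa) hsb
  · rw [if_neg hsa, if_pos hsb]
    constructor
    · rintro ⟨hC, hne, hd⟩
      have hk : idxOf φ a.1 = idxOf φ b.1 := by omega
      have hv := idx_inj φ hC hk
      refine ⟨?_, Or.inl hv⟩
      intro h; rw [h] at hsa; exact hsa hsb
    · rintro ⟨hab, h | ⟨hC, hiff⟩⟩
      · have hC : clauseOf φ a.1 = clauseOf φ b.1 := by rw [h]
        have hk : idxOf φ a.1 = idxOf φ b.1 := by rw [h]
        exact ⟨hC, by omega, by omega⟩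
      · exact absurd (hiff.2 hsb) hsa
  · rw [if_neg hsa, if_neg hsb]
    have ha' : a.2 = !(polOf φ a.1) := by
      cases ha2 : a.2 <;> cases hpa : polOf φ a.1 <;> simp_all
    have hb' : b.2 = !(polOf φ b.1) := by
      cases hb2 : b.2 <;> cases hpb : polOf φ b.1 <;> simp_all
    constructor
    · rintro ⟨hC, hne, -⟩
      have hv : a.1 ≠ b.1 := fun h => hne (by rw [h])
      exact ⟨fun h => hv (congrArg Prod.fst h), Or.inr ⟨hC, iff_of_false hsa hsb⟩⟩
    · rintro ⟨hab, h | ⟨hC, -⟩⟩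
      · exact absurd (Prod.ext h (by rw [ha', hb', h])) hab
      · refine ⟨hC, ?_, Or.inr (Or.inl ⟨by omega, by omega⟩)⟩
        intro h
        have hv : a.1 = b.1 := idx_inj φ hC (by omega)
        exact hab (Prod.ext hv (by rw [ha', hb', hv]))

noncomputable def theIso (hm : m = φ.threeClauses.card) (hnm : n = 3 * m) :
    matchingThreeGraph φ ≃g copies Prism m where
  toEquiv := Equiv.ofBijective (fwd φ hm) (fwd_bij φ hm hnm)
  map_rel_iff' := fun {a b} => adj_iff φ hm a b

end NAESATStarAux

end Aux

open NAESATStarAux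

/-- For a NAESAT* instance `φ` with `n` variables and `m = n/3`
3-clauses, the graph `G''` (matching edges plus 3-clause edges) is a disjoint union of
`m` prisms, one per 3-clause; in particular every vertex of the full Dasgupta graph of
`φ` has degree at most 5. -/
theorem matchingThreeGraph_iso_prisms (n : ℕ) (φ : NAESATStar n) (m : ℕ)
    (hm : m = φ.threeClauses.card) (hnm : n = 3 * m) :
    Nonempty (matchingThreeGraph φ ≃g copies Prism m) ∧
    ∀ v : Lit n, ((dasguptaGraph φ).neighborSet v).ncard ≤ 5 := by
  classical
  constructor
  · exact ⟨theIso φ hm hnm⟩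
  · intro v
    have hCmem := clauseOf_mem φ v.1
    set C := clauseOf φ v.1 with hCdef
    set T2 : Finset (Lit n) := if v.2 = polOf φ v.1 then C.erase v
        else (C.image Lit.neg).erase v with hT2
    have hT2card : T2.card ≤ 2 := by
      rw [hT2]; split_ifs with h
      · have hv : v ∈ C := (mem_three_iff φ hCmem).2 ⟨hCdef, h⟩
        rw [Finset.card_erase_of_mem hv, φ.three_card _ hCmem]
      · have hv : v ∈ C.image Lit.neg := by
          refine Finset.mem_image.2 ⟨Lit.neg v, ?_, ?_⟩
          · exact (mem_three_iff φ hCmem).2 ⟨hCdef, (bool_neg_iff _ _).2 h⟩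
          · exact neg_neg_lit v
        rw [Finset.card_erase_of_mem hv]
        have h1 := Finset.card_image_le (s := C) (f := Lit.neg)
        rw [φ.three_card _ hCmem] at h1
        omega
    set A : Set (Lit n) := {u | u ≠ v ∧ ∃ d ∈ φ.twoClauses, v ∈ d ∧ u ∈ d} with hA
    set B : Set (Lit n) :=
      {u | u ≠ v ∧ ∃ d ∈ φ.twoClauses, Lit.neg v ∈ d ∧ Lit.neg u ∈ d} with hB
    have hAcard : A.ncard ≤ 1 := by
      rw [Set.ncard_le_one (Set.toFinite A)]
      rintro a ⟨ha1, d, hd, hvd, had⟩ b ⟨hb1, d', hd', hvd', hbd'⟩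
      have hdd : d = d' := φ.lit_in_atMostOne_twoClause v d hd d' hd' hvd hvd'
      subst hdd
      have h1 : (d.erase v).card = 1 := by
        rw [Finset.card_erase_of_mem hvd, φ.two_card _ hd]
      obtain ⟨w, hw⟩ := Finset.card_eq_one.1 h1
      have ha' : a ∈ d.erase v := Finset.mem_erase.2 ⟨ha1, had⟩
      have hb' : b ∈ d.erase v := Finset.mem_erase.2 ⟨hb1, hbd'⟩
      rw [hw, Finset.mem_singleton] at ha' hb'
      rw [ha', hb']
    have hBcard : B.ncard ≤ 1 := by
      rw [Set.ncard_le_one (Set.toFinite B)]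
      rintro a ⟨ha1, d, hd, hvd, had⟩ b ⟨hb1, d', hd', hvd', hbd'⟩
      have hdd : d = d' := φ.lit_in_atMostOne_twoClause (Lit.neg v) d hd d' hd' hvd hvd'
      subst hdd
      have h1 : (d.erase (Lit.neg v)).card = 1 := by
        rw [Finset.card_erase_of_mem hvd, φ.two_card _ hd]
      obtain ⟨w, hw⟩ := Finset.card_eq_one.1 h1
      have ha' : Lit.neg a ∈ d.erase (Lit.neg v) :=
        Finset.mem_erase.2 ⟨fun h => ha1 (neg_lit_inj h), had⟩
      have hb' : Lit.neg b ∈ d.erase (Lit.neg v) :=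
        Finset.mem_erase.2 ⟨fun h => hb1 (neg_lit_inj h), hbd'⟩
      rw [hw, Finset.mem_singleton] at ha' hb'
      exact neg_lit_inj (ha'.trans hb'.symm)
    have hsub : (dasguptaGraph φ).neighborSet v ⊆
        (↑(insert (Lit.neg v) T2) : Set (Lit n)) ∪ (A ∪ B) := by
      intro u hu
      have hadj : (dasguptaGraph φ).Adj v u := hu
      rw [dasguptaGraph, SimpleGraph.fromRel_adj] at hadj
      obtain ⟨hne, h⟩ := hadj
      have hne' : u ≠ v := fun h' => hne h'.symm
      have h' : v.1 = u.1 ∨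
          (∃ c ∈ φ.twoClauses, (v ∈ c ∧ u ∈ c) ∨ (Lit.neg v ∈ c ∧ Lit.neg u ∈ c)) ∨
          (∃ c ∈ φ.threeClauses, (v ∈ c ∧ u ∈ c) ∨ (Lit.neg v ∈ c ∧ Lit.neg u ∈ c)) := by
        rcases h with h | h
        · exact h
        · rcases h with h1 | h1 | h1
          · exact Or.inl h1.symm
          · refine Or.inr (Or.inl ?_)
            obtain ⟨c, hc, hcc⟩ := h1; exact ⟨c, hc, by tauto⟩
          · refine Or.inr (Or.inr ?_)
            obtain ⟨c, hc, hcc⟩ := h1; exact ⟨c, hc, by tauto⟩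
      rcases h' with h' | h' | h'
      · left
        have h2 : u.2 ≠ v.2 := by
          intro h2
          exact hne' (Prod.ext h'.symm h2)
        have hu2 : u.2 = !v.2 := by
          cases hv2 : v.2 <;> cases hu2 : u.2 <;> simp_all
        have : u = Lit.neg v := Prod.ext h'.symm hu2
        rw [this]
        exact Finset.mem_coe.2 (Finset.mem_insert_self _ _)
      · right
        obtain ⟨c, hc, hcase⟩ := h'
        rcases hcase with ⟨h1, h2⟩ | ⟨h1, h2⟩
        · exact Or.inl ⟨hne', c, hc, h1, h2⟩
        · exact Or.inr ⟨hne', c, hc, h1, h2⟩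
      · left
        obtain ⟨c, hc, hcase⟩ := h'
        refine Finset.mem_coe.2 (Finset.mem_insert.2 (Or.inr ?_))
        rcases hcase with ⟨h1, h2⟩ | ⟨h1, h2⟩
        · have hcv := (mem_three_iff φ hc).1 h1
          have hC : c = C := hcv.1.trans hCdef.symm
          rw [hT2, if_pos hcv.2]
          exact Finset.mem_erase.2 ⟨hne', hC ▸ h2⟩
        · have hcv := (mem_three_iff φ hc).1 h1
          have hC : c = C := hcv.1.trans hCdef.symm
          have hpol : ¬ (v.2 = polOf φ v.1) := by
            have := hcv.2
            exact (bool_neg_iff _ _).1 this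
          rw [hT2, if_neg hpol]
          refine Finset.mem_erase.2 ⟨hne', ?_⟩
          refine Finset.mem_image.2 ⟨Lit.neg u, hC ▸ h2, neg_neg_lit u⟩
    have step1 : ((dasguptaGraph φ).neighborSet v).ncard ≤
        ((↑(insert (Lit.neg v) T2) : Set (Lit n)) ∪ (A ∪ B)).ncard :=
      Set.ncard_le_ncard hsub (Set.toFinite _)
    have step2 := Set.ncard_union_le (↑(insert (Lit.neg v) T2) : Set (Lit n)) (A ∪ B)
    have step3 := Set.ncard_union_le A B
    have step4 : (↑(insert (Lit.neg v) T2) : Set (Lit n)).ncard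
        = (insert (Lit.neg v) T2).card := Set.ncard_coe_finset _
    have step5 : (insert (Lit.neg v) T2).card ≤ 3 :=
      le_trans (Finset.card_insert_le _ _) (by omega)
    omega
end
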